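/- arXiv:1901.09671 — 3 statements merged into one kernel-verified Lean document; each statement's English description precedes it below -/
import Mathlib

section
/- Let f(x) = (1/n) Σ_{i=1}^n f_i(x) where each f_i : ℝ^d → ℝ is differentiable, let c divide n, and for i ∈ [n/c] let g[i](x) = Σ_{j=1}^c ∇f_{c(i-1)+j}(x). Let Y_1, ..., Y_{n/c} be the block non-straggler indicators induced by a uniformly random r-subset of k workers partitioned into n/c blocks of size ℓ = kc/n (2ℓ ≤ k), and let g(x) = (1/n) Σ_{i=1}^{n/c} Y_i g[i](x). Then E[‖g(x)‖²] = (1-q)‖∇f(x)‖² + ((q-p)/n²) Σ_{i=1}^{n/c} ‖g[i](x)‖², where p, q satisfy E[Y_i] = 1-p and E[Y_i Y_j] = 1-q for i ≠ j. -/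
open Finset

/-- Uniform expectation over all `r`-element subsets of the `k` workers. -/
noncomputable def unifExp (k r : ℕ) (X : Finset (Fin k) → ℝ) : ℝ :=
  (∑ S ∈ Finset.powersetCard r (Finset.univ : Finset (Fin k)), X S) / (k.choose r : ℝ)

/-- The index `c*(i-1)+j` (0-indexed: `c*i + j`) of the `j`-th task in the `i`-th block. -/
def taskIdx (n c : ℕ) (hc : c ∣ n) (i : Fin (n / c)) (j : Fin c) : Fin n :=
  ⟨c * i.val + j.val, by
    calc c * i.val + j.val < c * i.val + c := Nat.add_lt_add_left j.isLt _
      _ = c * (i.val + 1) := (Nat.mul_succ c i.val).symm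
      _ ≤ c * (n / c) := Nat.mul_le_mul (Nat.le_refl c) i.isLt
      _ = n := Nat.mul_div_cancel' hc⟩

/-- Second moment of the FRC(n,k,c) approximate gradient code output:
`E[‖g(x)‖²] = (1-q)‖∇f(x)‖² + ((q-p)/n²) Σᵢ ‖g[i](x)‖²`, where `E[Yᵢ] = 1-p` and
`E[YᵢYⱼ] = 1-q` for `i ≠ j`. -/
theorem agc_second_moment {d n k c r ℓ : ℕ} (hn : 0 < n) (hc : c ∣ n)
    (hr : r ≤ k) (hℓ : ℓ = k * c / n) (h2ℓ : 2 * ℓ ≤ k)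
    (W : Fin (n / c) → Finset (Fin k))
    (hWcard : ∀ i, (W i).card = ℓ)
    (hWdisj : ∀ i j, i ≠ j → Disjoint (W i) (W j))
    (f : Fin n → EuclideanSpace ℝ (Fin d) → ℝ)
    (x : EuclideanSpace ℝ (Fin d))
    (hdiff : ∀ i, DifferentiableAt ℝ (f i) x)
    (F : EuclideanSpace ℝ (Fin d) → ℝ)
    (hF : F = fun y => (1 / (n : ℝ)) * ∑ i, f i y)
    (gB : Fin (n / c) → EuclideanSpace ℝ (Fin d))
    (hgB : ∀ i, gB i = ∑ j : Fin c, gradient (f (taskIdx n c hc i j)) x)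
    (p q : ℝ)
    (hEp : ∀ i, unifExp k r (fun S => if (S ∩ W i).Nonempty then (1 : ℝ) else 0) = 1 - p)
    (hEq : ∀ i j, i ≠ j →
      unifExp k r (fun S =>
        (if (S ∩ W i).Nonempty then (1 : ℝ) else 0) *
          (if (S ∩ W j).Nonempty then (1 : ℝ) else 0)) = 1 - q) :
    unifExp k r (fun S =>
        ‖(1 / (n : ℝ)) • ∑ i : Fin (n / c),
            (if (S ∩ W i).Nonempty then (1 : ℝ) else 0) • gB i‖ ^ 2)
      = (1 - q) * ‖gradient F x‖ ^ 2
        + ((q - p) / (n : ℝ) ^ 2) * ∑ i : Fin (n / c), ‖gB i‖ ^ 2 := by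
  classical
  have hcpos : 0 < c := Nat.pos_of_dvd_of_pos hc hn
  have hnR : (n : ℝ) ≠ 0 := Nat.cast_ne_zero.mpr hn.ne'
  set Y : Fin (n / c) → Finset (Fin k) → ℝ :=
    fun i S => if (S ∩ W i).Nonempty then (1 : ℝ) else 0 with hY
  -- gradient of F
  have hFgrad : gradient F x = (1 / (n : ℝ)) • ∑ t, gradient (f t) x := by
    rw [hF]
    unfold gradient
    rw [fderiv_const_mul (DifferentiableAt.fun_sum fun i _ => hdiff i),
      fderiv_fun_sum fun i _ => (hdiff i), map_smul, map_sum]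
  -- reindexing: sum of block gradients = total gradient sum
  have hbij : Function.Bijective
      (fun pr : Fin (n / c) × Fin c => taskIdx n c hc pr.1 pr.2) := by
    rw [Fintype.bijective_iff_injective_and_card]
    constructor
    · rintro ⟨i₁, j₁⟩ ⟨i₂, j₂⟩ h
      have hv : c * i₁.val + j₁.val = c * i₂.val + j₂.val := congrArg Fin.val h
      have hi : i₁.val = i₂.val := by
        have h1 : (c * i₁.val + j₁.val) / c = i₁.val := by
          rw [Nat.mul_add_div hcpos, Nat.div_eq_of_lt j₁.isLt, Nat.add_zero]
        have h2 : (c * i₂.val + j₂.val) / c = i₂.val := by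
          rw [Nat.mul_add_div hcpos, Nat.div_eq_of_lt j₂.isLt, Nat.add_zero]
        rw [← h1, ← h2, hv]
      have hj : j₁.val = j₂.val := by
        rw [hi] at hv; exact Nat.add_left_cancel hv
      exact Prod.ext (Fin.ext hi) (Fin.ext hj)
    · simp [Nat.div_mul_cancel hc]
  have hsumB : ∑ i, gB i = ∑ t, gradient (f t) x := by
    calc ∑ i, gB i = ∑ pr : Fin (n / c) × Fin c,
        gradient (f (taskIdx n c hc pr.1 pr.2)) x := by
          rw [Fintype.sum_prod_type]; exact Finset.sum_congr rfl fun i _ => hgB i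
      _ = ∑ t, gradient (f t) x :=
          Fintype.sum_bijective _ hbij _ _ fun pr => rfl
  have hFgB : gradient F x = (1 / (n : ℝ)) • ∑ i, gB i := by rw [hFgrad, hsumB]
  -- pointwise expansion of the squared norm
  have hpt : ∀ S : Finset (Fin k),
      ‖(1 / (n : ℝ)) • ∑ i : Fin (n / c), Y i S • gB i‖ ^ 2
        = ∑ i, ∑ j, Y i S * Y j S * ((1 / (n : ℝ)) ^ 2 * inner ℝ (gB i) (gB j)) := by
    intro S
    rw [← real_inner_self_eq_norm_sq, real_inner_smul_left, real_inner_smul_right,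
      sum_inner]
    simp_rw [inner_sum, real_inner_smul_left, real_inner_smul_right,
      Finset.mul_sum]
    refine Finset.sum_congr rfl fun i _ => Finset.sum_congr rfl fun j _ => by ring
  -- the key expectation values
  have hkey : ∀ i j : Fin (n / c),
      (∑ S ∈ Finset.powersetCard r (Finset.univ : Finset (Fin k)), Y i S * Y j S)
        / (k.choose r : ℝ) = if i = j then 1 - p else 1 - q := by
    intro i j
    by_cases hij : i = j
    · subst hij
      rw [if_pos rfl, ← hEp i]
      unfold unifExp
      congr 1
      refine Finset.sum_congr rfl fun S _ => ?_
      simp only [hY]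
      split_ifs <;> norm_num
    · rw [if_neg hij, ← hEq i j hij]
      rfl
  -- main computation
  have hmain : unifExp k r (fun S =>
        ‖(1 / (n : ℝ)) • ∑ i : Fin (n / c), Y i S • gB i‖ ^ 2)
      = ∑ i, ∑ j, (if i = j then 1 - p else 1 - q)
          * ((1 / (n : ℝ)) ^ 2 * inner ℝ (gB i) (gB j)) := by
    unfold unifExp
    simp_rw [hpt]
    rw [Finset.sum_comm, Finset.sum_div]
    refine Finset.sum_congr rfl fun i _ => ?_
    rw [Finset.sum_comm, Finset.sum_div]
    refine Finset.sum_congr rfl fun j _ => ?_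
    rw [← Finset.sum_mul, mul_div_right_comm, hkey]
  -- diagonal / off-diagonal sums
  have hAsum : (1 / (n : ℝ)) ^ 2 * ∑ i, ∑ j, (inner ℝ (gB i) (gB j) : ℝ)
      = ‖gradient F x‖ ^ 2 := by
    calc (1 / (n : ℝ)) ^ 2 * ∑ i, ∑ j, (inner ℝ (gB i) (gB j) : ℝ)
        = (1 / (n : ℝ)) ^ 2 * inner ℝ (∑ i, gB i) (∑ i, gB i) := by
          rw [sum_inner]; simp_rw [inner_sum]
      _ = ‖(1 / (n : ℝ)) • ∑ i, gB i‖ ^ 2 := by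
          rw [real_inner_self_eq_norm_sq, norm_smul, mul_pow, Real.norm_eq_abs, sq_abs]
      _ = ‖gradient F x‖ ^ 2 := by rw [hFgB]
  have hAdiag : (1 / (n : ℝ)) ^ 2 * ∑ i, (inner ℝ (gB i) (gB i) : ℝ)
      = (1 / (n : ℝ)) ^ 2 * ∑ i, ‖gB i‖ ^ 2 := by
    simp_rw [real_inner_self_eq_norm_sq]
  have hsplit : ∀ i j : Fin (n / c),
      (if i = j then 1 - p else 1 - q) * ((1 / (n : ℝ)) ^ 2 * inner ℝ (gB i) (gB j))
        = (1 - q) * ((1 / (n : ℝ)) ^ 2 * inner ℝ (gB i) (gB j))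
          + (if i = j then (q - p) * ((1 / (n : ℝ)) ^ 2 * inner ℝ (gB i) (gB j)) else 0) := by
    intro i j; split_ifs <;> ring
  rw [hmain]
  simp_rw [hsplit, Finset.sum_add_distrib, Finset.sum_ite_eq, Finset.mem_univ,
    if_true, ← Finset.mul_sum]
  rw [hAsum, hAdiag]
  ring
end

section
/- Suppose f(x) = (1/n) Σ_{i=1}^n f_i(x) is β-smooth and μ-PL with β ≥ μ > 0, each f_i is differentiable with ‖∇f_i(x)‖ ≤ σ for all i and x, and p < 1. Consider the iteration x_{t+1} = x_t - γ ĝ(x_t) with step size γ = 1/β, where ĝ(x) = g(x)/(1-p), g(x) = (1/n) Σ_{i=1}^{n/c} Y_i^{(t)} g[i](x), g[i](x) = Σ_{j=1}^c ∇f_{c(i-1)+j}(x), and at each iteration the block indicators Y^{(t)} are induced by an independent uniformly random r-subset of the k workers (partitioned into n/c blocks of size ℓ = kc/n, 2ℓ ≤ k). Then Δ_T := E[f(x_T) - f*] satisfies Δ_T ≤ (1 - μ/β)^T Δ_0 + (σ²/(2(1-p)μ))·(p + (q-p)c/((1-p)n)). -/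
set_option maxHeartbeats 1000000

open Finset
open scoped RealInnerProductSpace

/-- The trajectory obtained by starting at `x0` and, at step `t`, applying the update
`upd (ω t)` determined by the non-straggler set `ω t` of that iteration. -/
def traj {k : ℕ} {E : Type*} (x0 : E) (upd : Finset (Fin k) → E → E)
    (ω : ℕ → Finset (Fin k)) : ℕ → E
  | 0 => x0
  | t + 1 => upd (ω t) (traj x0 upd ω t)

lemma traj_congr {k : ℕ} {E : Type*} (x0 : E) (upd : Finset (Fin k) → E → E)
    (ω ω' : ℕ → Finset (Fin k)) (T : ℕ) (h : ∀ t < T, ω t = ω' t) :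
    traj x0 upd ω T = traj x0 upd ω' T := by
  induction T with
  | zero => rfl
  | succ T ih =>
    simp only [traj, h T (Nat.lt_succ_self T),
      ih (fun t ht => h t (ht.trans (Nat.lt_succ_self T)))]

lemma traj_shift {k : ℕ} {E : Type*} (x0 : E) (upd : Finset (Fin k) → E → E)
    (ω : ℕ → Finset (Fin k)) (T : ℕ) :
    traj x0 upd ω (T + 1) = traj (upd (ω 0) x0) upd (fun t => ω (t + 1)) T := by
  induction T with
  | zero => rfl
  | succ T ih =>
    show upd (ω (T+1)) (traj x0 upd ω (T+1)) = upd (ω (T+1)) _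
    rw [ih]

lemma sum_piFinset_succ {k T : ℕ} {M : Type*} [AddCommMonoid M]
    (P : Finset (Finset (Fin k))) (h : (Fin (T + 1) → Finset (Fin k)) → M) :
    ∑ ω ∈ Fintype.piFinset (fun _ : Fin (T + 1) => P), h ω
      = ∑ S ∈ P, ∑ ω ∈ Fintype.piFinset (fun _ : Fin T => P), h (Fin.cons S ω) := by
  rw [← Finset.sum_product']
  refine Finset.sum_nbij' (fun ω => (ω 0, Fin.tail ω)) (fun x => Fin.cons x.1 x.2) ?_ ?_ ?_ ?_ ?_
  · intro ω hω
    simp only [Fintype.mem_piFinset] at hω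
    simp [Finset.mem_product, Fintype.mem_piFinset, Fin.tail, hω]
  · intro x hx
    simp only [Finset.mem_product, Fintype.mem_piFinset] at hx
    simp only [Fintype.mem_piFinset]
    intro i
    refine Fin.cases ?_ ?_ i
    · simpa using hx.1
    · intro j; simpa using hx.2 j
  · intro ω hω; exact Fin.cons_self_tail ω
  · intro x hx; simp
  · intro ω hω; rw [Fin.cons_self_tail]

lemma traj_sum_bound {k : ℕ} {E : Type*} (P : Finset (Finset (Fin k)))
    (upd : Finset (Fin k) → E → E) (Φ : E → ℝ) (a b : ℝ) (ha0 : 0 ≤ a)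
    (hstep : ∀ x, ∑ S ∈ P, Φ (upd S x) ≤ (P.card : ℝ) * (a * Φ x + b)) :
    ∀ (T : ℕ) (x0 : E),
      ∑ ω ∈ Fintype.piFinset (fun _ : Fin T => P),
        Φ (traj x0 upd (fun t => if h : t < T then ω ⟨t, h⟩ else ∅) T)
      ≤ (P.card : ℝ) ^ T * (a ^ T * Φ x0 + b * ∑ t ∈ Finset.range T, a ^ t) := by
  intro T
  induction T with
  | zero => intro x0; simp [traj]
  | succ T ih =>
    intro x0
    rw [sum_piFinset_succ]
    have key : ∀ S ∈ P, ∀ ω ∈ Fintype.piFinset (fun _ : Fin T => P),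
        Φ (traj x0 upd
          (fun t => if h : t < T + 1 then (Fin.cons S ω : Fin (T+1) → Finset (Fin k)) ⟨t, h⟩ else ∅) (T + 1))
        = Φ (traj (upd S x0) upd (fun t => if h : t < T then ω ⟨t, h⟩ else ∅) T) := by
      intro S hS ω hω
      rw [traj_shift]
      congr 1
      have h0 : (if h : (0:ℕ) < T + 1 then (Fin.cons S ω : Fin (T+1) → Finset (Fin k)) ⟨0, h⟩ else ∅) = S := by
        simp
      rw [h0]
      apply traj_congr
      intro t ht
      have h1 : t + 1 < T + 1 := by omega
      show (if h : t + 1 < T + 1 then (Fin.cons S ω : Fin (T+1) → Finset (Fin k)) ⟨t + 1, h⟩ else ∅) = _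
      rw [dif_pos h1, dif_pos ht]
      exact Fin.cons_succ (α := fun _ => Finset (Fin k)) S ω ⟨t, ht⟩
    calc ∑ S ∈ P, ∑ ω ∈ Fintype.piFinset (fun _ : Fin T => P),
          Φ (traj x0 upd
            (fun t => if h : t < T + 1 then (Fin.cons S ω : Fin (T+1) → Finset (Fin k)) ⟨t, h⟩ else ∅) (T + 1))
        = ∑ S ∈ P, ∑ ω ∈ Fintype.piFinset (fun _ : Fin T => P),
            Φ (traj (upd S x0) upd (fun t => if h : t < T then ω ⟨t, h⟩ else ∅) T) := by
          refine Finset.sum_congr rfl fun S hS => Finset.sum_congr rfl fun ω hω => key S hS ω hω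
      _ ≤ ∑ S ∈ P, (P.card : ℝ) ^ T * (a ^ T * Φ (upd S x0) + b * ∑ t ∈ Finset.range T, a ^ t) := by
          exact Finset.sum_le_sum fun S hS => ih (upd S x0)
      _ = (P.card : ℝ) ^ T * (a ^ T * ∑ S ∈ P, Φ (upd S x0)
            + (P.card : ℝ) * (b * ∑ t ∈ Finset.range T, a ^ t)) := by
          rw [← Finset.mul_sum, Finset.sum_add_distrib, ← Finset.mul_sum,
            Finset.sum_const, nsmul_eq_mul]
      _ ≤ (P.card : ℝ) ^ T * (a ^ T * ((P.card : ℝ) * (a * Φ x0 + b))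
            + (P.card : ℝ) * (b * ∑ t ∈ Finset.range T, a ^ t)) := by
          apply mul_le_mul_of_nonneg_left _ (by positivity)
          exact add_le_add_left
            (mul_le_mul_of_nonneg_left (hstep x0) (pow_nonneg ha0 T)) _
      _ = (P.card : ℝ) ^ (T + 1) * (a ^ (T + 1) * Φ x0 + b * ∑ t ∈ Finset.range (T + 1), a ^ t) := by
          rw [Finset.sum_range_succ]
          ring

lemma count_inter_empty {k r : ℕ} (A : Finset (Fin k)) :
    ((powersetCard r (univ : Finset (Fin k))).filter (fun S => S ∩ A = ∅)).card
      = (k - A.card).choose r := by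
  have h : (powersetCard r (univ : Finset (Fin k))).filter (fun S => S ∩ A = ∅)
      = powersetCard r Aᶜ := by
    ext S
    simp only [Finset.mem_filter, Finset.mem_powersetCard, Finset.subset_univ, true_and,
      ← Finset.disjoint_iff_inter_eq_empty, ← le_compl_iff_disjoint_right]
    exact and_comm
  rw [h, Finset.card_powersetCard, Finset.card_compl, Fintype.card_fin]

lemma sum_indicator_one {k r : ℕ} (A : Finset (Fin k)) :
    ∑ S ∈ powersetCard r (univ : Finset (Fin k)), (if (S ∩ A).Nonempty then (1:ℝ) else 0)
      = (k.choose r : ℝ) - ((k - A.card).choose r : ℝ) := by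
  classical
  rw [Finset.sum_boole]
  have h1 := Finset.card_filter_add_card_filter_not
    (s := powersetCard r (univ : Finset (Fin k))) (p := fun S => (S ∩ A).Nonempty)
  have h2 : (powersetCard r (univ : Finset (Fin k))).filter (fun S => ¬ (S ∩ A).Nonempty)
      = (powersetCard r (univ : Finset (Fin k))).filter (fun S => S ∩ A = ∅) := by
    apply Finset.filter_congr
    intro S _
    simp [Finset.not_nonempty_iff_eq_empty]
  rw [h2, count_inter_empty] at h1
  have h3 : (powersetCard r (univ : Finset (Fin k))).card = k.choose r := by
    rw [Finset.card_powersetCard, Finset.card_univ, Fintype.card_fin]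
  rw [h3] at h1
  have := congrArg (fun x : ℕ => (x : ℝ)) h1
  push_cast at this
  linarith

lemma sum_indicator_two {k r : ℕ} (A B : Finset (Fin k)) (hAB : Disjoint A B) :
    ∑ S ∈ powersetCard r (univ : Finset (Fin k)),
      (if (S ∩ A).Nonempty then (1:ℝ) else 0) * (if (S ∩ B).Nonempty then (1:ℝ) else 0)
      = (k.choose r : ℝ) - ((k - A.card).choose r : ℝ) - ((k - B.card).choose r : ℝ)
        + ((k - (A.card + B.card)).choose r : ℝ) := by
  classical
  have hprod : ∀ S : Finset (Fin k),
      (if (S ∩ A).Nonempty then (1:ℝ) else 0) * (if (S ∩ B).Nonempty then (1:ℝ) else 0)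
      = if ((S ∩ A).Nonempty ∧ (S ∩ B).Nonempty) then (1:ℝ) else 0 := by
    intro S
    by_cases h1 : (S ∩ A).Nonempty <;> by_cases h2 : (S ∩ B).Nonempty <;> simp [h1, h2]
  simp only [hprod]
  rw [Finset.sum_boole]
  set P := powersetCard r (univ : Finset (Fin k)) with hP
  have h1 := Finset.card_filter_add_card_filter_not
    (s := P) (p := fun S => (S ∩ A).Nonempty ∧ (S ∩ B).Nonempty)
  have h2 : P.filter (fun S => ¬ ((S ∩ A).Nonempty ∧ (S ∩ B).Nonempty))
      = P.filter (fun S => S ∩ A = ∅ ∨ S ∩ B = ∅) := by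
    apply Finset.filter_congr
    intro S _
    rw [not_and_or, Finset.not_nonempty_iff_eq_empty, Finset.not_nonempty_iff_eq_empty]
  have h4 : (P.filter (fun S => S ∩ A = ∅ ∨ S ∩ B = ∅)).card
        + (P.filter (fun S => S ∩ A = ∅ ∧ S ∩ B = ∅)).card
      = (P.filter (fun S => S ∩ A = ∅)).card + (P.filter (fun S => S ∩ B = ∅)).card := by
    rw [Finset.filter_or, Finset.filter_and]
    exact Finset.card_union_add_card_inter _ _
  have h5 : P.filter (fun S => S ∩ A = ∅ ∧ S ∩ B = ∅)
      = P.filter (fun S => S ∩ (A ∪ B) = ∅) := by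
    apply Finset.filter_congr
    intro S _
    rw [Finset.inter_union_distrib_left, Finset.union_eq_empty]
  rw [h5, count_inter_empty, count_inter_empty, count_inter_empty,
    Finset.card_union_of_disjoint hAB] at h4
  rw [h2] at h1
  have h3 : P.card = k.choose r := by
    rw [hP, Finset.card_powersetCard, Finset.card_univ, Fintype.card_fin]
  rw [h3] at h1
  have c1 := congrArg (fun x : ℕ => (x : ℝ)) h1
  have c4 := congrArg (fun x : ℕ => (x : ℝ)) h4
  push_cast at c1 c4
  linarith

lemma gradient_const_mul_sum {ι : Type*} [Fintype ι] {F : Type*}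
    [NormedAddCommGroup F] [InnerProductSpace ℝ F] [CompleteSpace F]
    (f : ι → F → ℝ) (hdiff : ∀ i, Differentiable ℝ (f i)) (a : ℝ) (x : F) :
    gradient (fun y => a * ∑ i, f i y) x = a • ∑ i, gradient (f i) x := by
  have hsum : ∀ i ∈ (univ : Finset ι), DifferentiableAt ℝ (fun y => f i y) x :=
    fun i _ => (hdiff i) x
  have hd : DifferentiableAt ℝ (fun y => ∑ i, f i y) x :=
    DifferentiableAt.fun_sum hsum
  unfold gradient
  rw [fderiv_const_mul hd, fderiv_fun_sum hsum, map_smul, map_sum]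

lemma sum_taskIdx {n c : ℕ} (hc : c ∣ n) (hcpos : 0 < c) {M : Type*} [AddCommMonoid M]
    (u : Fin n → M) :
    ∑ i : Fin n, u i = ∑ i : Fin (n / c), ∑ j : Fin c, u (taskIdx n c hc i j) := by
  have hsp : ∑ i : Fin (n / c), ∑ j : Fin c, u (taskIdx n c hc i j)
      = ∑ p : Fin (n / c) × Fin c, u (taskIdx n c hc p.1 p.2) :=
    (Fintype.sum_prod_type (f := fun p : Fin (n / c) × Fin c => u (taskIdx n c hc p.1 p.2))).symm
  rw [hsp]
  symm
  apply Fintype.sum_bijective (fun p : Fin (n / c) × Fin c => taskIdx n c hc p.1 p.2)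
  · rw [Fintype.bijective_iff_injective_and_card]
    constructor
    · rintro ⟨i1, j1⟩ ⟨i2, j2⟩ h
      have hv : c * i1.val + j1.val = c * i2.val + j2.val := congrArg Fin.val h
      have hi : i1.val = i2.val := by
        have e1 : (c * i1.val + j1.val) / c = i1.val := by
          rw [Nat.mul_add_div hcpos, Nat.div_eq_of_lt j1.isLt, Nat.add_zero]
        have e2 : (c * i2.val + j2.val) / c = i2.val := by
          rw [Nat.mul_add_div hcpos, Nat.div_eq_of_lt j2.isLt, Nat.add_zero]
        rw [← e1, ← e2, hv]
      have hj : j1.val = j2.val := by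
        rw [hi] at hv; omega
      exact Prod.ext (Fin.ext hi) (Fin.ext hj)
    · simp [Nat.div_mul_cancel hc]
  · intro p; rfl

/-- Convergence of ErasureHead (FRC(n,k,c) approximate-gradient-coded gradient descent) with
step size `γ = 1/β` on a `β`-smooth, `μ`-PL function: `Δ_T ≤ (1-μ/β)^T Δ_0 +
(σ²/(2(1-p)μ))(p + (q-p)c/((1-p)n))`. -/
theorem erasurehead_convergence_step_one_over_beta
    {d n k c r ℓ T : ℕ} (hn : 0 < n) (hc : c ∣ n)
    (hr : r ≤ k) (hℓ : ℓ = k * c / n) (h2ℓ : 2 * ℓ ≤ k)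
    (W : Fin (n / c) → Finset (Fin k))
    (hWcard : ∀ i, (W i).card = ℓ)
    (hWdisj : ∀ i j, i ≠ j → Disjoint (W i) (W j))
    (f : Fin n → EuclideanSpace ℝ (Fin d) → ℝ)
    (hdiff : ∀ i, Differentiable ℝ (f i))
    (σ β μ fstar : ℝ) (hμ : 0 < μ) (hβμ : μ ≤ β)
    (hσ : ∀ i x, ‖gradient (f i) x‖ ≤ σ)
    (F : EuclideanSpace ℝ (Fin d) → ℝ)
    (hF : F = fun y => (1 / (n : ℝ)) * ∑ i, f i y)
    (hsmooth : ∀ x y, F y ≤ F x + inner ℝ (gradient F x) (y - x) + (β / 2) * ‖y - x‖ ^ 2)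
    (hmin : ∀ x, fstar ≤ F x) (hattain : ∃ x, F x = fstar)
    (hPL : ∀ x, μ * (F x - fstar) ≤ (1 / 2) * ‖gradient F x‖ ^ 2)
    (p q : ℝ)
    (hp : p = ((k - ℓ).choose r : ℝ) / (k.choose r : ℝ))
    (hq : q = (2 * ((k - ℓ).choose r : ℝ) - ((k - 2 * ℓ).choose r : ℝ)) / (k.choose r : ℝ))
    (hp1 : p < 1)
    (x0 : EuclideanSpace ℝ (Fin d))
    (X : (ℕ → Finset (Fin k)) → ℕ → EuclideanSpace ℝ (Fin d))
    (hX : X = fun ω => traj x0 (fun S x => x - (1 / β) • ((1 - p)⁻¹ •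
        ((1 / (n : ℝ)) • ∑ i : Fin (n / c),
          (if (S ∩ W i).Nonempty then (1 : ℝ) else 0) •
            ∑ j : Fin c, gradient (f (taskIdx n c hc i j)) x)) ) ω)
    (ΔT : ℝ)
    (hΔT : ΔT = (∑ ω ∈ Fintype.piFinset
          (fun _ : Fin T => Finset.powersetCard r (Finset.univ : Finset (Fin k))),
        (F (X (fun t => if h : t < T then ω ⟨t, h⟩ else ∅) T) - fstar))
      / ((k.choose r : ℝ)) ^ T) :
    ΔT ≤ (1 - μ / β) ^ T * (F x0 - fstar)
      + (σ ^ 2 / (2 * (1 - p) * μ)) * (p + (q - p) * c / ((1 - p) * n)) := by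
  classical
  have hβ : 0 < β := lt_of_lt_of_le hμ hβμ
  have hc0 : 0 < c := by
    rcases Nat.eq_zero_or_pos c with h | h
    · exfalso; rw [h, zero_dvd_iff] at hc; omega
    · exact h
  have hnR : (0:ℝ) < n := by exact_mod_cast hn
  have hcR : (0:ℝ) < c := by exact_mod_cast hc0
  have hN : 0 < k.choose r := Nat.choose_pos hr
  have hNR : (0:ℝ) < k.choose r := by exact_mod_cast hN
  have h1p : (0:ℝ) < 1 - p := by linarith
  have hp0 : 0 ≤ p := by rw [hp]; positivity
  have hσ0 : 0 ≤ σ := le_trans (norm_nonneg _) (hσ ⟨0, hn⟩ 0)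
  have hqp : p ≤ q := by
    rw [hp, hq]
    have hmono : (k - 2*ℓ).choose r ≤ (k - ℓ).choose r :=
      Nat.choose_le_choose r (by omega)
    have hm : ((k - 2*ℓ).choose r : ℝ) ≤ ((k - ℓ).choose r : ℝ) := by exact_mod_cast hmono
    gcongr
    linarith
  have hqp0 : (0:ℝ) ≤ q - p := by linarith
  -- make the goal concrete
  rw [hΔT, hX]
  beta_reduce
  set P : Finset (Finset (Fin k)) := Finset.powersetCard r (Finset.univ : Finset (Fin k))
    with hPdef
  have hPcard : P.card = k.choose r := by
    rw [hPdef, Finset.card_powersetCard, Finset.card_univ, Fintype.card_fin]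
  set Y : Finset (Fin k) → Fin (n/c) → ℝ :=
    fun S i => if (S ∩ W i).Nonempty then (1:ℝ) else 0 with hYdef
  set g : EuclideanSpace ℝ (Fin d) → Fin (n/c) → EuclideanSpace ℝ (Fin d) :=
    fun x i => ∑ j : Fin c, gradient (f (taskIdx n c hc i j)) x with hgdef
  set upd : Finset (Fin k) → EuclideanSpace ℝ (Fin d) → EuclideanSpace ℝ (Fin d) :=
    fun S x => x - (1 / β) • ((1 - p)⁻¹ •
        ((1 / (n : ℝ)) • ∑ i : Fin (n / c),
          (if (S ∩ W i).Nonempty then (1 : ℝ) else 0) •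
            ∑ j : Fin c, gradient (f (taskIdx n c hc i j)) x)) with hupdef
  have hupdx : ∀ S x, upd S x
      = x - (1/β) • ((1-p)⁻¹ • ((1/(n:ℝ)) • ∑ i : Fin (n/c), Y S i • g x i)) :=
    fun S x => rfl
  -- expectation identities
  have hY1 : ∀ i, ∑ S ∈ P, Y S i = (k.choose r : ℝ) * (1 - p) := by
    intro i
    have h := sum_indicator_one (r := r) (W i)
    rw [hWcard i] at h
    simp only [hYdef, hPdef]
    rw [h, hp]
    field_simp
  have hY2 : ∀ i j, i ≠ j → ∑ S ∈ P, Y S i * Y S j = (k.choose r : ℝ) * (1 - q) := by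
    intro i j hij
    have h := sum_indicator_two (r := r) (W i) (W j) (hWdisj i j hij)
    rw [hWcard i, hWcard j] at h
    have h2 : ℓ + ℓ = 2 * ℓ := by omega
    rw [h2] at h
    simp only [hYdef, hPdef]
    rw [h, hq]
    field_simp
    ring
  have hYsq : ∀ S i, Y S i * Y S i = Y S i := by
    intro S i
    simp only [hYdef]
    by_cases h : (S ∩ W i).Nonempty <;> simp [h]
  -- gradient structure
  have hgradF : ∀ x, gradient F x = (1/(n:ℝ)) • ∑ i, g x i := by
    intro x
    rw [hF, gradient_const_mul_sum f hdiff (1/(n:ℝ)) x,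
      sum_taskIdx hc hc0 (fun i => gradient (f i) x)]
  have hgnorm : ∀ x i, ‖g x i‖ ≤ c * σ := by
    intro x i
    simp only [hgdef]
    calc ‖∑ j : Fin c, gradient (f (taskIdx n c hc i j)) x‖
        ≤ ∑ j : Fin c, ‖gradient (f (taskIdx n c hc i j)) x‖ := norm_sum_le _ _
      _ ≤ ∑ _j : Fin c, σ := Finset.sum_le_sum fun j _ => hσ _ x
      _ = c * σ := by
          rw [Finset.sum_const, Finset.card_univ, Fintype.card_fin, nsmul_eq_mul]
  have hGFnorm : ∀ x, ‖gradient F x‖ ≤ σ := by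
    intro x
    rw [hF, gradient_const_mul_sum f hdiff (1/(n:ℝ)) x, norm_smul]
    have hs : ‖∑ i : Fin n, gradient (f i) x‖ ≤ (n:ℝ) * σ := by
      calc ‖∑ i : Fin n, gradient (f i) x‖
          ≤ ∑ i : Fin n, ‖gradient (f i) x‖ := norm_sum_le _ _
        _ ≤ ∑ _i : Fin n, σ := Finset.sum_le_sum fun i _ => hσ i x
        _ = (n:ℝ) * σ := by
            rw [Finset.sum_const, Finset.card_univ, Fintype.card_fin, nsmul_eq_mul]
    have hnorm1 : ‖(1/(n:ℝ))‖ = 1/(n:ℝ) := by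
      rw [Real.norm_eq_abs, abs_of_pos (by positivity)]
    rw [hnorm1]
    calc (1/(n:ℝ)) * ‖∑ i : Fin n, gradient (f i) x‖ ≤ (1/(n:ℝ)) * ((n:ℝ) * σ) := by
          apply mul_le_mul_of_nonneg_left hs (by positivity)
      _ = σ := by field_simp
  -- the one-step expectation bound
  have hstep : ∀ x, ∑ S ∈ P, (F (upd S x) - fstar)
      ≤ (P.card : ℝ) * ((1 - μ/β) * (F x - fstar)
        + σ^2/(2*β*(1-p)) * (p + (q-p)*(c:ℝ)/((1-p)*(n:ℝ)))) := by
    intro x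
    set GF := gradient F x with hGF
    set v : Finset (Fin k) → EuclideanSpace ℝ (Fin d) :=
      fun S => (1-p)⁻¹ • ((1/(n:ℝ)) • ∑ i, Y S i • g x i) with hvdef
    have hupdv : ∀ S, upd S x = x - (1/β) • v S := fun S => rfl
    -- smoothness applied to each S
    have hsm : ∀ S, F (upd S x) ≤ F x - (1/β) * ⟪GF, v S⟫ + (1/(2*β)) * ‖v S‖^2 := by
      intro S
      have h := hsmooth x (upd S x)
      have hdx : upd S x - x = -((1/β) • v S) := by
        rw [hupdv S, sub_sub_cancel_left]
      rw [hdx, inner_neg_right, real_inner_smul_right, norm_neg, norm_smul] at h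
      have hb : ‖(1/β)‖ = 1/β := by
        rw [Real.norm_eq_abs, abs_of_pos (by positivity)]
      rw [hb] at h
      calc F (upd S x) ≤ F x + -(1/β * ⟪GF, v S⟫) + β/2 * (1/β * ‖v S‖)^2 := h
        _ = F x - (1/β) * ⟪GF, v S⟫ + (1/(2*β)) * ‖v S‖^2 := by
            field_simp
            ring
    -- first moment
    have hvsum : ∑ S ∈ P, v S = (k.choose r : ℝ) • GF := by
      simp only [hvdef]
      rw [← Finset.smul_sum, ← Finset.smul_sum, Finset.sum_comm]
      have hi : ∀ i ∈ (univ : Finset (Fin (n/c))), ∑ S ∈ P, Y S i • g x i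
          = ((k.choose r : ℝ) * (1-p)) • g x i := by
        intro i _
        rw [← Finset.sum_smul, hY1 i]
      rw [Finset.sum_congr rfl hi, ← Finset.smul_sum, hGF, hgradF x,
        smul_smul, smul_smul, smul_smul]
      congr 1
      field_simp
    have hinner : ∑ S ∈ P, ⟪GF, v S⟫ = (k.choose r : ℝ) * ‖GF‖^2 := by
      rw [← inner_sum, hvsum, real_inner_smul_right, real_inner_self_eq_norm_sq]
    -- second moment
    have hw : ∀ S, ‖v S‖^2
        = ((1-p)⁻¹)^2 * (1/(n:ℝ))^2 * ‖∑ i, Y S i • g x i‖^2 := by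
      intro S
      simp only [hvdef]
      rw [norm_smul, norm_smul, Real.norm_eq_abs, Real.norm_eq_abs,
        abs_of_pos (by positivity : (0:ℝ) < (1-p)⁻¹),
        abs_of_pos (by positivity : (0:ℝ) < 1/(n:ℝ))]
      ring
    have hexp : ∀ S, ‖∑ i, Y S i • g x i‖^2
        = ∑ i, ∑ j, (Y S i * Y S j) * ⟪g x i, g x j⟫ := by
      intro S
      rw [← real_inner_self_eq_norm_sq, sum_inner]
      refine Finset.sum_congr rfl fun i _ => ?_
      rw [inner_sum]
      refine Finset.sum_congr rfl fun j _ => ?_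
      rw [real_inner_smul_left, real_inner_smul_right]
      ring
    have hkey : ∀ i j : Fin (n/c), ∑ S ∈ P, Y S i * Y S j
        = (k.choose r : ℝ) * (1-q)
          + (if i = j then (k.choose r : ℝ) * ((1-p)-(1-q)) else 0) := by
      intro i j
      by_cases h : i = j
      · subst h
        rw [if_pos rfl]
        simp only [hYsq]
        rw [hY1 i]
        ring
      · rw [if_neg h, hY2 i j h, add_zero]
    have hGG : ∑ i, ∑ j, ⟪g x i, g x j⟫ = ‖∑ i, g x i‖^2 := by
      rw [← real_inner_self_eq_norm_sq, sum_inner]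
      exact Finset.sum_congr rfl fun i _ => (inner_sum _ _ _).symm
    have hsumnorm : ∑ S ∈ P, ‖∑ i, Y S i • g x i‖^2
        = (k.choose r : ℝ) * ((1-q) * ‖∑ i, g x i‖^2 + (q-p) * ∑ i, ‖g x i‖^2) := by
      simp only [hexp]
      rw [Finset.sum_comm]
      have h1 : ∀ i ∈ (univ : Finset (Fin (n/c))),
          ∑ S ∈ P, ∑ j, (Y S i * Y S j) * ⟪g x i, g x j⟫
          = ∑ j, ((k.choose r : ℝ) * (1-q)
              + (if i = j then (k.choose r : ℝ) * ((1-p)-(1-q)) else 0)) * ⟪g x i, g x j⟫ := by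
        intro i _
        rw [Finset.sum_comm]
        refine Finset.sum_congr rfl fun j _ => ?_
        rw [← Finset.sum_mul, hkey i j]
      rw [Finset.sum_congr rfl h1]
      have h2 : ∀ i ∈ (univ : Finset (Fin (n/c))),
          ∑ j, ((k.choose r : ℝ) * (1-q)
              + (if i = j then (k.choose r : ℝ) * ((1-p)-(1-q)) else 0)) * ⟪g x i, g x j⟫
          = (∑ j, (k.choose r : ℝ) * (1-q) * ⟪g x i, g x j⟫)
            + (k.choose r : ℝ) * ((1-p)-(1-q)) * ‖g x i‖^2 := by
        intro i _
        simp only [add_mul]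
        rw [Finset.sum_add_distrib]
        congr 1
        simp only [ite_mul, zero_mul]
        rw [Finset.sum_ite_eq]
        rw [if_pos (Finset.mem_univ i), real_inner_self_eq_norm_sq]
      rw [Finset.sum_congr rfl h2, Finset.sum_add_distrib]
      have h3 : ∑ i, ∑ j, (k.choose r : ℝ) * (1-q) * ⟪g x i, g x j⟫
          = (k.choose r : ℝ) * (1-q) * ‖∑ i, g x i‖^2 := by
        rw [← hGG, Finset.mul_sum]
        exact Finset.sum_congr rfl fun i _ => (Finset.mul_sum _ _ _).symm
      rw [h3]
      have h4 : ∑ i, (k.choose r : ℝ) * ((1-p)-(1-q)) * ‖g x i‖^2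
          = (k.choose r : ℝ) * ((1-p)-(1-q)) * ∑ i, ‖g x i‖^2 := by
        rw [← Finset.mul_sum]
      rw [h4]
      ring
    -- bounds on the second moment pieces
    have hgsum : ‖∑ i, g x i‖^2 = (n:ℝ)^2 * ‖GF‖^2 := by
      have he : (∑ i, g x i) = (n:ℝ) • GF := by
        rw [hGF, hgradF x, smul_smul, mul_one_div_cancel hnR.ne', one_smul]
      rw [he, norm_smul, Real.norm_eq_abs, abs_of_pos hnR, mul_pow]
    have hgsq : ∑ i, ‖g x i‖^2 ≤ (n:ℝ) * (c:ℝ) * σ^2 := by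
      have hnc : ((n/c : ℕ):ℝ) * (c:ℝ) = (n:ℝ) := by
        rw [← Nat.cast_mul, Nat.div_mul_cancel hc]
      calc ∑ i : Fin (n/c), ‖g x i‖^2 ≤ ∑ _i : Fin (n/c), ((c:ℝ)*σ)^2 :=
            Finset.sum_le_sum fun i _ => by
              have h := hgnorm x i
              nlinarith [norm_nonneg (g x i)]
        _ = ((n/c : ℕ):ℝ) * ((c:ℝ)*σ)^2 := by
            rw [Finset.sum_const, Finset.card_univ, Fintype.card_fin, nsmul_eq_mul]
        _ = (n:ℝ) * (c:ℝ) * σ^2 := by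
            rw [← hnc]; ring
    have hvnormsum : ∑ S ∈ P, ‖v S‖^2
        ≤ (k.choose r : ℝ) * ((1-p)⁻¹ * ‖GF‖^2
            + ((1-p)⁻¹)^2 * (q-p) * ((c:ℝ)*σ^2/(n:ℝ))) := by
      simp only [hw]
      rw [← Finset.mul_sum, hsumnorm, hgsum]
      have h1 : ((1-p)⁻¹)^2 * (1/(n:ℝ))^2
            * ((k.choose r:ℝ) * ((1-q) * ((n:ℝ)^2*‖GF‖^2) + (q-p) * ∑ i, ‖g x i‖^2))
          = (k.choose r:ℝ) * (((1-p)⁻¹)^2 * (1-q) * ‖GF‖^2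
            + ((1-p)⁻¹)^2 * (q-p) * ((∑ i, ‖g x i‖^2) / (n:ℝ)^2)) := by
        field_simp
      rw [h1]
      apply mul_le_mul_of_nonneg_left _ hNR.le
      apply add_le_add
      · apply mul_le_mul_of_nonneg_right _ (sq_nonneg _)
        calc ((1-p)⁻¹)^2 * (1-q) ≤ ((1-p)⁻¹)^2 * (1-p) := by
              apply mul_le_mul_of_nonneg_left (by linarith) (sq_nonneg _)
          _ = (1-p)⁻¹ := by
              field_simp
      · apply mul_le_mul_of_nonneg_left _ (by positivity)
        rw [div_le_div_iff₀ (by positivity) hnR]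
        nlinarith [hgsq]
    -- combine
    have hsum1 : ∑ S ∈ P, F (upd S x)
        ≤ (P.card:ℝ) * F x - (1/β) * ((k.choose r:ℝ) * ‖GF‖^2)
          + (1/(2*β)) * ∑ S ∈ P, ‖v S‖^2 := by
      calc ∑ S ∈ P, F (upd S x)
          ≤ ∑ S ∈ P, (F x - (1/β) * ⟪GF, v S⟫ + (1/(2*β)) * ‖v S‖^2) :=
            Finset.sum_le_sum fun S _ => hsm S
        _ = (P.card:ℝ) * F x - (1/β) * ∑ S ∈ P, ⟪GF, v S⟫
            + (1/(2*β)) * ∑ S ∈ P, ‖v S‖^2 := by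
            rw [Finset.sum_add_distrib, Finset.sum_sub_distrib, Finset.sum_const,
              nsmul_eq_mul, ← Finset.mul_sum, ← Finset.mul_sum]
        _ = (P.card:ℝ) * F x - (1/β) * ((k.choose r:ℝ) * ‖GF‖^2)
            + (1/(2*β)) * ∑ S ∈ P, ‖v S‖^2 := by rw [hinner]
    have hGFσ : ‖GF‖^2 ≤ σ^2 := by
      have h := hGFnorm x
      nlinarith [norm_nonneg GF]
    have hPLx := hPL x
    have hmainx : F x - fstar - (1/β) * ‖GF‖^2
          + (1/(2*β)) * ((1-p)⁻¹ * ‖GF‖^2 + ((1-p)⁻¹)^2 * (q-p) * ((c:ℝ)*σ^2/(n:ℝ)))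
        ≤ (1 - μ/β) * (F x - fstar)
          + σ^2/(2*β*(1-p)) * (p + (q-p)*(c:ℝ)/((1-p)*(n:ℝ))) := by
      have hD : ((1 - μ/β) * (F x - fstar)
            + σ^2/(2*β*(1-p)) * (p + (q-p)*(c:ℝ)/((1-p)*(n:ℝ))))
          - (F x - fstar - (1/β) * ‖GF‖^2
            + (1/(2*β)) * ((1-p)⁻¹ * ‖GF‖^2 + ((1-p)⁻¹)^2 * (q-p) * ((c:ℝ)*σ^2/(n:ℝ))))
          = (1/β) * ((1/2)*‖GF‖^2 - μ*(F x - fstar))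
            + ((1/(2*β)) * (p * (1-p)⁻¹)) * (σ^2 - ‖GF‖^2) := by
        field_simp
        ring
      have h1' : 0 ≤ (1/β) * ((1/2)*‖GF‖^2 - μ*(F x - fstar)) :=
        mul_nonneg (by positivity) (by linarith [hPL x])
      have h2' : 0 ≤ ((1/(2*β)) * (p * (1-p)⁻¹)) * (σ^2 - ‖GF‖^2) :=
        mul_nonneg (by positivity) (by linarith [hGFσ])
      linarith [hD, h1', h2']
    calc ∑ S ∈ P, (F (upd S x) - fstar)
        = (∑ S ∈ P, F (upd S x)) - (P.card:ℝ) * fstar := by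
          rw [Finset.sum_sub_distrib, Finset.sum_const, nsmul_eq_mul]
      _ ≤ (P.card:ℝ) * F x - (1/β) * ((k.choose r:ℝ) * ‖GF‖^2)
            + (1/(2*β)) * ((k.choose r : ℝ) * ((1-p)⁻¹ * ‖GF‖^2
              + ((1-p)⁻¹)^2 * (q-p) * ((c:ℝ)*σ^2/(n:ℝ)))) - (P.card:ℝ) * fstar := by
          have := mul_le_mul_of_nonneg_left hvnormsum (by positivity : (0:ℝ) ≤ 1/(2*β))
          linarith [hsum1]
      _ = (k.choose r:ℝ) * (F x - fstar - (1/β) * ‖GF‖^2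
            + (1/(2*β)) * ((1-p)⁻¹ * ‖GF‖^2
              + ((1-p)⁻¹)^2 * (q-p) * ((c:ℝ)*σ^2/(n:ℝ)))) := by
          rw [hPcard]
          push_cast
          ring
      _ ≤ (k.choose r:ℝ) * ((1 - μ/β) * (F x - fstar)
            + σ^2/(2*β*(1-p)) * (p + (q-p)*(c:ℝ)/((1-p)*(n:ℝ)))) :=
          mul_le_mul_of_nonneg_left hmainx hNR.le
      _ = (P.card : ℝ) * ((1 - μ/β) * (F x - fstar)
            + σ^2/(2*β*(1-p)) * (p + (q-p)*(c:ℝ)/((1-p)*(n:ℝ)))) := by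
          rw [hPcard]
  -- assemble over T steps
  have ha0 : 0 ≤ 1 - μ/β := by
    have : μ/β ≤ 1 := (div_le_one hβ).mpr hβμ
    linarith
  have ha1 : 1 - μ/β < 1 := by
    have : 0 < μ/β := by positivity
    linarith
  set b : ℝ := σ^2/(2*β*(1-p)) * (p + (q-p)*(c:ℝ)/((1-p)*(n:ℝ))) with hbdef
  have hb0 : 0 ≤ b := by
    rw [hbdef]
    positivity
  have hmain := traj_sum_bound P upd (fun y => F y - fstar) (1-μ/β) b ha0 hstep T x0
  have hgeom : ∑ t ∈ Finset.range T, (1-μ/β)^t ≤ 1/(1-(1-μ/β)) := by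
    have h := geom_sum_mul (1-μ/β) T
    have h1a : 0 < 1-(1-μ/β) := by linarith
    have haT : 0 ≤ (1-μ/β) ^ T := pow_nonneg ha0 T
    rw [le_div_iff₀ h1a]
    nlinarith [h]
  have hgeom2 : ∑ t ∈ Finset.range T, (1-μ/β)^t ≤ β/μ := by
    have he : 1/(1-(1-μ/β)) = β/μ := by
      field_simp
      rw [sub_sub_cancel, div_self hμ.ne']
    linarith [hgeom, he ▸ hgeom]
  have hdiv : (0:ℝ) < ((k.choose r : ℝ))^T := by positivity
  rw [div_le_iff₀ hdiv]
  have hPcR : ((P.card : ℕ):ℝ) = (k.choose r : ℝ) := by rw [hPcard]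
  calc ∑ ω ∈ Fintype.piFinset (fun _ : Fin T => P),
        (F (traj x0 upd (fun t => if h : t < T then ω ⟨t, h⟩ else ∅) T) - fstar)
      ≤ ((P.card : ℕ):ℝ)^T * ((1-μ/β)^T * (F x0 - fstar)
          + b * ∑ t ∈ Finset.range T, (1-μ/β)^t) := hmain
    _ ≤ ((k.choose r : ℝ))^T * ((1-μ/β)^T * (F x0 - fstar) + b * (β/μ)) := by
        rw [hPcR]
        apply mul_le_mul_of_nonneg_left _ (by positivity)
        apply add_le_add_right
        exact mul_le_mul_of_nonneg_left hgeom2 hb0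
    _ = ((1-μ/β)^T * (F x0 - fstar)
          + σ^2/(2*(1-p)*μ) * (p + (q-p)*(c:ℝ)/((1-p)*(n:ℝ)))) * ((k.choose r : ℝ))^T := by
        rw [hbdef]
        have hbb : σ^2/(2*β*(1-p)) * (p + (q-p)*(c:ℝ)/((1-p)*(n:ℝ))) * (β/μ)
            = σ^2/(2*(1-p)*μ) * (p + (q-p)*(c:ℝ)/((1-p)*(n:ℝ))) := by
          field_simp
        rw [← hbb]
        ring
end

section
/- Suppose f(x) = (1/n) Σ_{i=1}^n f_i(x) is β-smooth and μ-PL with β ≥ μ > 0, each f_i is differentiable with ‖∇f_i(x)‖ ≤ σ for all i and x, and c ≥ n·ln(2)/r. Consider the iteration x_{t+1} = x_t - (1/β) ĝ(x_t), where ĝ(x) = g(x)/(1-p), g(x) = (1/n) Σ_{i=1}^{n/c} Y_i^{(t)} g[i](x), g[i](x) = Σ_{j=1}^c ∇f_{c(i-1)+j}(x), and at each iteration the block indicators Y^{(t)} are induced by an independent uniformly random r-subset of the k workers (partitioned into n/c blocks of size ℓ = kc/n, 2ℓ ≤ k). Then Δ_T := E[f(x_T) - f*] satisfies Δ_T ≤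 (1 - μ/β)^T Δ_0 + e^{-cr/n}σ²/μ + 4c·e^{-cr/n}σ²/(μn). -/
open Finset
set_option maxHeartbeats 1000000

private lemma eh_desc_sq (r a b m : ℕ) (h : a + b = 2 * m) :
    a.descFactorial r * b.descFactorial r ≤ m.descFactorial r ^ 2 := by
  induction r with
  | zero => simp
  | succ r ih =>
    rw [Nat.descFactorial_succ, Nat.descFactorial_succ, Nat.descFactorial_succ]
    have key : (a - r) * (b - r) ≤ (m - r) ^ 2 := by
      rcases le_or_gt a r with h1 | h1
      · simp [Nat.sub_eq_zero_of_le h1]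
      rcases le_or_gt b r with h2 | h2
      · simp [Nat.sub_eq_zero_of_le h2]
      · have hm : r < m := by omega
        zify [h1.le, h2.le, hm.le]
        nlinarith [sq_nonneg ((a:ℤ) - b)]
    calc (a - r) * a.descFactorial r * ((b - r) * b.descFactorial r)
        = ((a - r) * (b - r)) * (a.descFactorial r * b.descFactorial r) := by ring
      _ ≤ (m - r) ^ 2 * (m.descFactorial r ^ 2) := Nat.mul_le_mul key ih
      _ = ((m - r) * m.descFactorial r) ^ 2 := by ring

private lemma eh_choose_sq (k ℓ r : ℕ) (h : 2 * ℓ ≤ k) :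
    (k - 2 * ℓ).choose r * k.choose r ≤ (k - ℓ).choose r ^ 2 := by
  have h2 : (k - 2*ℓ) + k = 2 * (k - ℓ) := by omega
  have key := eh_desc_sq r (k - 2*ℓ) k (k - ℓ) h2
  rw [Nat.descFactorial_eq_factorial_mul_choose, Nat.descFactorial_eq_factorial_mul_choose,
    Nat.descFactorial_eq_factorial_mul_choose] at key
  have hfac : 0 < Nat.factorial r * Nat.factorial r :=
    Nat.mul_pos r.factorial_pos r.factorial_pos
  refine Nat.le_of_mul_le_mul_left ?_ hfac
  calc Nat.factorial r * Nat.factorial r * ((k - 2*ℓ).choose r * k.choose r)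
      = Nat.factorial r * (k - 2*ℓ).choose r * (Nat.factorial r * k.choose r) := by ring
    _ ≤ (Nat.factorial r * (k - ℓ).choose r) ^ 2 := key
    _ = Nat.factorial r * Nat.factorial r * ((k - ℓ).choose r ^ 2) := by ring

private lemma eh_desc_step (m r : ℕ) :
    m.descFactorial r * (m+1)^r ≤ (m+1).descFactorial r * m^r := by
  induction r with
  | zero => simp
  | succ r ih =>
    rw [Nat.descFactorial_succ, Nat.descFactorial_succ, pow_succ, pow_succ]
    rcases le_or_gt m r with h1 | h1
    · simp [Nat.sub_eq_zero_of_le h1]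
    · have key : (m - r) * (m + 1) ≤ (m + 1 - r) * m := by
        have h2 : m + 1 - r = (m - r) + 1 := by omega
        rw [h2, add_mul, one_mul]
        have : m - r ≤ m := Nat.sub_le m r
        nlinarith [Nat.sub_le m r]
      calc (m - r) * m.descFactorial r * ((m+1) ^ r * (m+1))
          = ((m - r) * (m+1)) * (m.descFactorial r * (m+1) ^ r) := by ring
        _ ≤ ((m + 1 - r) * m) * ((m+1).descFactorial r * m ^ r) := Nat.mul_le_mul key ih
        _ = (m + 1 - r) * (m+1).descFactorial r * (m ^ r * m) := by ring


private lemma eh_choose_step (m r : ℕ) :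
    m.choose r * (m+1)^r ≤ (m+1).choose r * m^r := by
  have key := eh_desc_step m r
  rw [Nat.descFactorial_eq_factorial_mul_choose, Nat.descFactorial_eq_factorial_mul_choose] at key
  refine Nat.le_of_mul_le_mul_left ?_ r.factorial_pos
  calc Nat.factorial r * (m.choose r * (m+1)^r)
      = Nat.factorial r * m.choose r * (m+1)^r := by ring
    _ ≤ Nat.factorial r * (m+1).choose r * m^r := key
    _ = Nat.factorial r * ((m+1).choose r * m^r) := by ring

private lemma eh_choose_chain (k r : ℕ) : ∀ a : ℕ,
    (k - a).choose r * k ^ r ≤ k.choose r * (k - a) ^ r := by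
  intro a
  induction a with
  | zero => simp [Nat.mul_comm]
  | succ a ih =>
    rcases le_or_gt k a with h | h
    · have h1 : k - (a+1) = k - a := by omega
      rw [h1]; exact ih
    · set m := k - (a + 1) with hm
      have hm1 : m + 1 = k - a := by omega
      rcases Nat.eq_zero_or_pos ((m+1).choose r) with h0 | h0
      · have : m.choose r = 0 :=
          Nat.le_antisymm (h0 ▸ Nat.choose_le_choose r (Nat.le_succ m)) (Nat.zero_le _)
        simp [this]
      · have step := eh_choose_step m r
        have ih' : (m+1).choose r * k ^ r ≤ k.choose r * (m+1) ^ r := by rw [hm1]; exact ih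
        have hpos : 0 < (m+1).choose r * (m+1)^r := Nat.mul_pos h0 (Nat.pow_pos m.succ_pos)
        refine Nat.le_of_mul_le_mul_left ?_ hpos
        calc (m+1).choose r * (m+1)^r * (m.choose r * k ^ r)
            = (m.choose r * (m+1)^r) * ((m+1).choose r * k ^ r) := by ring
          _ ≤ ((m+1).choose r * m^r) * (k.choose r * (m+1) ^ r) := Nat.mul_le_mul step ih'
          _ = (m+1).choose r * (m+1)^r * (k.choose r * m ^ r) := by ring

private lemma eh_p_le_exp (k a r : ℕ) (hk : 0 < k) (ha : a ≤ k) (hrk : r ≤ k) :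
    ((k - a).choose r : ℝ) / (k.choose r : ℝ) ≤ Real.exp (-(a * r : ℝ) / k) := by
  have hN : (0:ℝ) < (k.choose r : ℝ) := by exact_mod_cast Nat.choose_pos hrk
  have hkR : (0:ℝ) < (k:ℝ) := by exact_mod_cast hk
  have hkr : (0:ℝ) < (k:ℝ)^r := by positivity
  have hcast : ((k - a : ℕ) : ℝ) = (k : ℝ) - a := by push_cast [ha]; ring
  have h1 : ((k - a).choose r : ℝ) * (k:ℝ)^r ≤ (k.choose r : ℝ) * ((k:ℝ) - a)^r := by
    have h2 : (((k - a).choose r * k ^ r : ℕ) : ℝ) ≤ ((k.choose r * (k - a) ^ r : ℕ) : ℝ) := by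
      exact_mod_cast eh_choose_chain k r a
    push_cast at h2
    rwa [hcast] at h2
  have hstep : ((k - a).choose r : ℝ) / (k.choose r : ℝ) ≤ (1 - (a:ℝ)/k)^r := by
    rw [div_le_iff₀ hN, show (1 - (a:ℝ)/k) = ((k:ℝ)-a)/k from by field_simp, div_pow,
      div_mul_eq_mul_div, le_div_iff₀ hkr]
    linarith [h1]
  refine hstep.trans ?_
  have h0 : (0:ℝ) ≤ 1 - (a:ℝ)/k := by
    rw [sub_nonneg, div_le_one hkR]; exact_mod_cast ha
  have hb : (1 - (a:ℝ)/k) ≤ Real.exp (-(a:ℝ)/k) := by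
    have h3 := Real.add_one_le_exp (-(a:ℝ)/k)
    rw [neg_div] at h3 ⊢
    linarith
  calc (1 - (a:ℝ)/k)^r ≤ Real.exp (-(a:ℝ)/k) ^ r := pow_le_pow_left₀ h0 hb r
    _ = Real.exp (-(a*r:ℝ)/k) := by
        rw [← Real.exp_nat_mul]; congr 1; ring

private lemma eh_gradient_avg {d n : ℕ} (f : Fin n → EuclideanSpace ℝ (Fin d) → ℝ)
    (hdiff : ∀ i, Differentiable ℝ (f i)) (x : EuclideanSpace ℝ (Fin d)) :
    gradient (fun y => (1 / (n : ℝ)) * ∑ i, f i y) x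
      = (1 / (n:ℝ)) • ∑ i, gradient (f i) x := by
  have hds : DifferentiableAt ℝ (fun y => ∑ i, f i y) x :=
    DifferentiableAt.fun_sum (fun i _ => (hdiff i).differentiableAt)
  have h1 : fderiv ℝ (fun y => (1 / (n : ℝ)) * ∑ i, f i y) x
      = (1 / (n:ℝ)) • fderiv ℝ (fun y => ∑ i, f i y) x := by
    rw [fderiv_const_mul hds]
  have h2 : fderiv ℝ (fun y => ∑ i, f i y) x = ∑ i, fderiv ℝ (f i) x := by
    rw [fderiv_fun_sum (fun i _ => (hdiff i).differentiableAt)]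
  unfold gradient
  rw [h1, h2, map_smul, map_sum]

private lemma eh_sum_blocks {n c : ℕ} (hc : c ∣ n) (hcpos : 0 < c) {M : Type*}
    [AddCommMonoid M] (v : Fin n → M) :
    ∑ i : Fin (n/c), ∑ j : Fin c, v (taskIdx n c hc i j) = ∑ i, v i := by
  have hb : Function.Bijective (fun p : Fin (n/c) × Fin c => taskIdx n c hc p.1 p.2) := by
    rw [Fintype.bijective_iff_injective_and_card]
    constructor
    · rintro ⟨i1, j1⟩ ⟨i2, j2⟩ h
      have hv : c * i1.val + j1.val = c * i2.val + j2.val := congrArg Fin.val h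
      have e1 : ∀ (i : Fin (n/c)) (j : Fin c), (c * i.val + j.val) / c = i.val := by
        intro i j
        rw [Nat.mul_add_div hcpos, Nat.div_eq_of_lt j.isLt, Nat.add_zero]
      have e2 : ∀ (i : Fin (n/c)) (j : Fin c), (c * i.val + j.val) % c = j.val := by
        intro i j
        rw [Nat.mul_add_mod, Nat.mod_eq_of_lt j.isLt]
      have hi : i1 = i2 := Fin.ext (by rw [← e1 i1 j1, ← e1 i2 j2, hv])
      have hj : j1 = j2 := Fin.ext (by rw [← e2 i1 j1, ← e2 i2 j2, hv])
      rw [hi, hj]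
    · simp [Nat.div_mul_cancel hc]
  rw [← Fintype.sum_bijective _ hb _ v (fun p => rfl), Fintype.sum_prod_type]

private lemma eh_traj_congr {k : ℕ} {E : Type*} (x0 : E) (upd : Finset (Fin k) → E → E)
    {ω ω' : ℕ → Finset (Fin k)} : ∀ {t : ℕ}, (∀ s, s < t → ω s = ω' s) →
    traj x0 upd ω t = traj x0 upd ω' t := by
  intro t
  induction t with
  | zero => intro _; rfl
  | succ t ih =>
    intro h
    show upd (ω t) (traj x0 upd ω t) = upd (ω' t) (traj x0 upd ω' t)
    rw [h t (Nat.lt_succ_self t), ih (fun s hs => h s (Nat.lt_succ_of_lt hs))]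

private lemma eh_traj_shift {k : ℕ} {E : Type*} (x0 : E) (upd : Finset (Fin k) → E → E)
    (ω : ℕ → Finset (Fin k)) : ∀ t : ℕ,
    traj x0 upd ω (t+1) = traj (upd (ω 0) x0) upd (fun s => ω (s+1)) t := by
  intro t
  induction t with
  | zero => rfl
  | succ t ih =>
    show upd (ω (t+1)) (traj x0 upd ω (t+1)) = _
    rw [ih]
    rfl

private lemma eh_piFinset_succ {α M : Type*} [DecidableEq α] [AddCommMonoid M] (t : ℕ)
    (A : Finset α) (g : (Fin (t+1) → α) → M) :
    ∑ ω ∈ Fintype.piFinset (fun _ : Fin (t+1) => A), g ω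
      = ∑ S ∈ A, ∑ ωs ∈ Fintype.piFinset (fun _ : Fin t => A), g (Fin.cons S ωs) := by
  rw [← Finset.sum_product']
  apply Finset.sum_nbij' (i := fun ω => ((ω 0 : α), fun i : Fin t => ω i.succ))
    (j := fun p => Fin.cons p.1 p.2)
  · intro ω hω
    rw [Fintype.mem_piFinset] at hω
    rw [Finset.mem_product]
    exact ⟨hω 0, by rw [Fintype.mem_piFinset]; exact fun i => hω i.succ⟩
  · intro p hp
    rw [Finset.mem_product] at hp
    rw [Fintype.mem_piFinset]
    intro i
    refine Fin.cases ?_ ?_ i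
    · rw [Fin.cons_zero]; exact hp.1
    · intro j; rw [Fin.cons_succ]; exact (Fintype.mem_piFinset.1 hp.2) j
  · intro ω _
    exact Fin.cons_self_tail ω
  · intro p _
    simp
  · intro ω _
    exact congrArg g (Fin.cons_self_tail ω).symm


section EHhelp
variable {k : ℕ} {H : Type*} [NormedAddCommGroup H] [InnerProductSpace ℝ H]

local notation "⟪" x ", " y "⟫" => @inner ℝ _ _ x y

private lemma eh_count1 {mm ℓ r : ℕ} (W : Fin mm → Finset (Fin k))
    (hWcard : ∀ i, (W i).card = ℓ) (i : Fin mm) :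
    ∑ S ∈ powersetCard r (univ : Finset (Fin k)), (if (S ∩ W i).Nonempty then (0:ℝ) else 1)
      = ((k - ℓ).choose r : ℝ) := by
  have h1 : ∀ S : Finset (Fin k), (if (S ∩ W i).Nonempty then (0:ℝ) else 1)
      = (if ¬(S ∩ W i).Nonempty then (1:ℝ) else 0) := by
    intro S; by_cases h : (S ∩ W i).Nonempty <;> simp [h]
  simp_rw [h1]
  rw [Finset.sum_boole]
  congr 1
  have : (powersetCard r (univ : Finset (Fin k))).filter (fun S => ¬(S ∩ W i).Nonempty)
      = powersetCard r (univ \ W i) := by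
    ext S
    simp only [mem_filter, mem_powersetCard, not_nonempty_iff_eq_empty,
      ← disjoint_iff_inter_eq_empty, subset_sdiff]
    tauto
  rw [this, Finset.card_powersetCard, Finset.card_sdiff_of_subset (subset_univ _), card_univ,
    Fintype.card_fin, hWcard]

private lemma eh_count2 {mm ℓ r : ℕ} (W : Fin mm → Finset (Fin k))
    (hWcard : ∀ i, (W i).card = ℓ) (hWdisj : ∀ i j, i ≠ j → Disjoint (W i) (W j))
    {i j : Fin mm} (hij : i ≠ j) :
    ∑ S ∈ powersetCard r (univ : Finset (Fin k)),
      (if (S ∩ W i).Nonempty then (0:ℝ) else 1) * (if (S ∩ W j).Nonempty then (0:ℝ) else 1)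
      = ((k - 2*ℓ).choose r : ℝ) := by
  have h1 : ∀ S : Finset (Fin k),
      (if (S ∩ W i).Nonempty then (0:ℝ) else 1) * (if (S ∩ W j).Nonempty then (0:ℝ) else 1)
      = (if ¬(S ∩ W i).Nonempty ∧ ¬(S ∩ W j).Nonempty then (1:ℝ) else 0) := by
    intro S
    by_cases h : (S ∩ W i).Nonempty <;> by_cases h' : (S ∩ W j).Nonempty <;> simp [h, h']
  simp_rw [h1]
  rw [Finset.sum_boole]
  congr 1
  have h2 : (powersetCard r (univ : Finset (Fin k))).filter
        (fun S => ¬(S ∩ W i).Nonempty ∧ ¬(S ∩ W j).Nonempty)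
      = powersetCard r (univ \ (W i ∪ W j)) := by
    ext S
    simp only [mem_filter, mem_powersetCard, not_nonempty_iff_eq_empty,
      ← disjoint_iff_inter_eq_empty, subset_sdiff, disjoint_union_right]
    tauto
  rw [h2, Finset.card_powersetCard, Finset.card_sdiff_of_subset (subset_univ _), card_univ,
    Fintype.card_fin, Finset.card_union_of_disjoint (hWdisj i j hij), hWcard, hWcard]
  congr 2
  omega

private lemma eh_Ysum {mm : ℕ} (W : Fin mm → Finset (Fin k)) (g : Fin mm → H)
    (S : Finset (Fin k)) :
    ∑ i, (if (S ∩ W i).Nonempty then (1:ℝ) else 0) • g i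
      = (∑ i, g i) - ∑ i, (if (S ∩ W i).Nonempty then (0:ℝ) else 1) • g i := by
  rw [← Finset.sum_sub_distrib]
  congr 1; ext i
  by_cases h : (S ∩ W i).Nonempty <;> simp [h]

private lemma eh_wsum {mm ℓ r : ℕ} (W : Fin mm → Finset (Fin k))
    (hWcard : ∀ i, (W i).card = ℓ) (g : Fin mm → H) :
    ∑ S ∈ powersetCard r (univ : Finset (Fin k)),
      ∑ i, (if (S ∩ W i).Nonempty then (0:ℝ) else 1) • g i
      = (((k-ℓ).choose r : ℝ)) • ∑ i, g i := by
  rw [Finset.sum_comm, Finset.smul_sum]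
  congr 1; ext i
  rw [← Finset.sum_smul, eh_count1 W hWcard]

private lemma eh_mean {mm ℓ r : ℕ} (hrk : r ≤ k) (W : Fin mm → Finset (Fin k))
    (hWcard : ∀ i, (W i).card = ℓ) (g : Fin mm → H) (p : ℝ)
    (hp : p = ((k - ℓ).choose r : ℝ) / (k.choose r : ℝ)) (hphalf : p ≤ 1/2) :
    ∑ S ∈ powersetCard r (univ : Finset (Fin k)),
      (1-p)⁻¹ • (∑ i, (if (S ∩ W i).Nonempty then (1:ℝ) else 0) • g i)
      = (k.choose r : ℝ) • (∑ i, g i) := by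
  have hNR : (0:ℝ) < (k.choose r : ℝ) := by exact_mod_cast Nat.choose_pos hrk
  have h1p : (1:ℝ) - p ≠ 0 := by intro h; rw [sub_eq_zero] at h; linarith
  have hcard : (powersetCard r (univ : Finset (Fin k))).card = k.choose r := by
    rw [Finset.card_powersetCard, card_univ, Fintype.card_fin]
  simp_rw [eh_Ysum W g]
  rw [← Finset.smul_sum, Finset.sum_sub_distrib, Finset.sum_const, hcard,
    eh_wsum W hWcard g, ← Nat.cast_smul_eq_nsmul ℝ, ← sub_smul, smul_smul]
  congr 1
  have hCl : ((k-ℓ).choose r : ℝ) = p * (k.choose r) := by rw [hp]; field_simp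
  rw [hCl]
  field_simp
private lemma eh_w2sum {mm ℓ r : ℕ} (W : Fin mm → Finset (Fin k))
    (hWcard : ∀ i, (W i).card = ℓ) (hWdisj : ∀ i j, i ≠ j → Disjoint (W i) (W j))
    (g : Fin mm → H) :
    ∑ S ∈ powersetCard r (univ : Finset (Fin k)),
        ‖∑ i, (if (S ∩ W i).Nonempty then (0:ℝ) else 1) • g i‖^2
      = ((k-ℓ).choose r : ℝ) * (∑ i, ‖g i‖^2)
        + ((k-2*ℓ).choose r : ℝ) * (‖∑ i, g i‖^2 - ∑ i, ‖g i‖^2) := by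
  set A := powersetCard r (univ : Finset (Fin k)) with hA
  set Z : Finset (Fin k) → Fin mm → ℝ := fun S i => if (S ∩ W i).Nonempty then (0:ℝ) else 1
    with hZ
  have hws : ∀ S, ‖∑ i, Z S i • g i‖^2 = ∑ i, ∑ j, (Z S i * Z S j) * ⟪g i, g j⟫ := by
    intro S
    rw [← real_inner_self_eq_norm_sq, sum_inner]
    refine Finset.sum_congr rfl fun i _ => ?_
    rw [real_inner_smul_left, inner_sum, Finset.mul_sum]
    refine Finset.sum_congr rfl fun j _ => ?_
    rw [real_inner_smul_right]; ring
  have hZZ : ∀ i j : Fin mm, ∑ S ∈ A, Z S i * Z S j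
      = if i = j then ((k-ℓ).choose r : ℝ) else ((k-2*ℓ).choose r : ℝ) := by
    intro i j
    by_cases h : i = j
    · subst h
      rw [if_pos rfl, ← eh_count1 W hWcard i]
      refine Finset.sum_congr rfl fun S _ => ?_
      simp only [hZ]
      by_cases h : (S ∩ W i).Nonempty <;> simp [h]
    · rw [if_neg h]; exact eh_count2 W hWcard hWdisj h
  calc ∑ S ∈ A, ‖∑ i, Z S i • g i‖^2
      = ∑ S ∈ A, ∑ i, ∑ j, (Z S i * Z S j) * ⟪g i, g j⟫ := Finset.sum_congr rfl fun S _ => hws S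
    _ = ∑ i, ∑ j, (∑ S ∈ A, Z S i * Z S j) * ⟪g i, g j⟫ := by
        rw [Finset.sum_comm]
        refine Finset.sum_congr rfl fun i _ => ?_
        rw [Finset.sum_comm]
        refine Finset.sum_congr rfl fun j _ => ?_
        rw [Finset.sum_mul]
    _ = ∑ i, ∑ j, (((k-2*ℓ).choose r : ℝ) * ⟪g i, g j⟫
          + (if i = j then ((k-ℓ).choose r : ℝ) - ((k-2*ℓ).choose r : ℝ) else 0) * ⟪g i, g j⟫) := by
        refine Finset.sum_congr rfl fun i _ => Finset.sum_congr rfl fun j _ => ?_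
        rw [hZZ i j]
        by_cases h : i = j <;> simp [h] <;> ring
    _ = ((k-ℓ).choose r : ℝ) * (∑ i, ‖g i‖^2)
        + ((k-2*ℓ).choose r : ℝ) * (‖∑ i, g i‖^2 - ∑ i, ‖g i‖^2) := by
        simp_rw [Finset.sum_add_distrib]
        have h1 : ∑ i, ∑ j, ((k-2*ℓ).choose r : ℝ) * ⟪g i, g j⟫
            = ((k-2*ℓ).choose r : ℝ) * ‖∑ i, g i‖^2 := by
          rw [← real_inner_self_eq_norm_sq, sum_inner]
          simp_rw [inner_sum, Finset.mul_sum]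
        have h2 : ∑ i : Fin mm, ∑ j,
            (if i = j then ((k-ℓ).choose r : ℝ) - ((k-2*ℓ).choose r : ℝ) else 0) * ⟪g i, g j⟫
            = (((k-ℓ).choose r : ℝ) - ((k-2*ℓ).choose r : ℝ)) * ∑ i, ‖g i‖^2 := by
          have h3 : ∀ i : Fin mm, ∑ j,
              (if i = j then ((k-ℓ).choose r : ℝ) - ((k-2*ℓ).choose r : ℝ) else 0) * ⟪g i, g j⟫
              = (((k-ℓ).choose r : ℝ) - ((k-2*ℓ).choose r : ℝ)) * ‖g i‖^2 := by
            intro i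
            rw [Finset.sum_eq_single i]
            · rw [if_pos rfl, real_inner_self_eq_norm_sq]
            · intro j _ hj
              rw [if_neg (fun h => hj h.symm), zero_mul]
            · intro h; exact absurd (Finset.mem_univ i) h
          simp_rw [h3]
          rw [← Finset.mul_sum]
        rw [h1, h2]; ring
private lemma eh_var {mm ℓ r : ℕ} (hrk : r ≤ k) (h2ℓ : 2*ℓ ≤ k)
    (W : Fin mm → Finset (Fin k))
    (hWcard : ∀ i, (W i).card = ℓ) (hWdisj : ∀ i j, i ≠ j → Disjoint (W i) (W j))
    (g : Fin mm → H) (cσ : ℝ) (hg : ∀ i, ‖g i‖ ≤ cσ) (hcσ : 0 ≤ cσ)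
    (p : ℝ) (hp : p = ((k - ℓ).choose r : ℝ) / (k.choose r : ℝ))
    (hphalf : p ≤ 1/2) :
    ∑ S ∈ powersetCard r (univ : Finset (Fin k)),
      ‖(1-p)⁻¹ • (∑ i, (if (S ∩ W i).Nonempty then (1:ℝ) else 0) • g i) - (∑ i, g i)‖^2
      ≤ 4 * p * (k.choose r : ℝ) * (mm * cσ^2) := by
  have hNR : (0:ℝ) < (k.choose r : ℝ) := by exact_mod_cast Nat.choose_pos hrk
  have hp0 : 0 ≤ p := by rw [hp]; positivity
  have h1p : (1:ℝ)/2 ≤ 1 - p := by linarith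
  have h1pne : (1:ℝ) - p ≠ 0 := by linarith
  have hinv2 : (1-p)⁻¹ ≤ 2 := by
    rw [inv_le_comm₀ (by linarith) (by norm_num)]; linarith
  have hinv0 : (0:ℝ) ≤ (1-p)⁻¹ := by positivity
  set A := powersetCard r (univ : Finset (Fin k)) with hA
  set u := ∑ i, g i with hu
  set w : Finset (Fin k) → H := fun S => ∑ i, (if (S ∩ W i).Nonempty then (0:ℝ) else 1) • g i
    with hw
  set Cl := ((k-ℓ).choose r : ℝ) with hCl
  set C2 := ((k-2*ℓ).choose r : ℝ) with hC2
  set N := (k.choose r : ℝ) with hN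
  set D := ∑ i, ‖g i‖^2 with hD
  have hcardA : (A.card : ℝ) = N := by
    rw [hA, Finset.card_powersetCard, card_univ, Fintype.card_fin, hN]
  have hClpN : Cl = p * N := by
    rw [hCl, hp, hN]; field_simp
    exact (mul_div_cancel_right₀ _ (ne_of_gt hNR)).symm
  have hDb : D ≤ mm * cσ^2 := by
    rw [hD]
    calc ∑ i, ‖g i‖^2 ≤ ∑ _i : Fin mm, cσ^2 :=
          Finset.sum_le_sum fun i _ => pow_le_pow_left₀ (norm_nonneg _) (hg i) 2
      _ = mm * cσ^2 := by rw [Finset.sum_const, card_univ, Fintype.card_fin, nsmul_eq_mul]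
  have hD0 : 0 ≤ D := by rw [hD]; positivity
  have hC20 : 0 ≤ C2 := by rw [hC2]; positivity
  have hqp : C2 * N ≤ Cl^2 := by
    rw [hC2, hN, hCl]
    exact_mod_cast eh_choose_sq k ℓ r h2ℓ
  -- rewrite each summand
  have hstep1 : ∀ S, (1-p)⁻¹ • (∑ i, (if (S ∩ W i).Nonempty then (1:ℝ) else 0) • g i) - u
      = (1-p)⁻¹ • (p • u - w S) := by
    intro S
    rw [eh_Ysum W g S]
    have h5 : (1-p)⁻¹ • ((1-p) • u) = u := by
      rw [smul_smul, inv_mul_cancel₀ h1pne, one_smul]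
    calc (1-p)⁻¹ • (u - w S) - u = (1-p)⁻¹ • (u - w S) - (1-p)⁻¹ • ((1-p) • u) := by rw [h5]
      _ = (1-p)⁻¹ • ((u - w S) - (1-p) • u) := by rw [← smul_sub]
      _ = (1-p)⁻¹ • (p • u - w S) := by
          congr 1
          rw [sub_smul, one_smul]
          abel
  have hterm : ∀ S, ‖(1-p)⁻¹ • (p • u - w S)‖^2 = ((1-p)⁻¹)^2 * ‖p • u - w S‖^2 := by
    intro S
    rw [norm_smul, Real.norm_eq_abs, mul_pow, sq_abs]
  have hiw : ∑ S ∈ A, ⟪u, w S⟫ = Cl * ‖u‖^2 := by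
    have h6 : ∑ S ∈ A, w S = ((k-ℓ).choose r : ℝ) • u := by
      rw [hA]; exact eh_wsum W hWcard g
    rw [← inner_sum, h6, real_inner_smul_right, real_inner_self_eq_norm_sq, ← hCl]
  have hw2 : ∑ S ∈ A, ‖w S‖^2 = Cl * D + C2 * (‖u‖^2 - D) := eh_w2sum W hWcard hWdisj g
  have hterm2 : ∀ S, ‖p • u - w S‖^2 = p^2*‖u‖^2 - 2*(p*⟪u, w S⟫) + ‖w S‖^2 := by
    intro S
    rw [norm_sub_sq_real, real_inner_smul_left, norm_smul, Real.norm_eq_abs, mul_pow, sq_abs]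
  have hsum : ∑ S ∈ A, ‖p • u - w S‖^2
      = N*(p^2*‖u‖^2) - 2*(p*(Cl * ‖u‖^2)) + (Cl * D + C2 * (‖u‖^2 - D)) := by
    simp_rw [hterm2]
    rw [Finset.sum_add_distrib, Finset.sum_sub_distrib, Finset.sum_const, ← Finset.mul_sum,
      ← Finset.mul_sum, hiw, hw2, nsmul_eq_mul, hcardA]
  have hsumle : ∑ S ∈ A, ‖p • u - w S‖^2 ≤ Cl * D := by
    rw [hsum]
    have hu2 : (0:ℝ) ≤ ‖u‖^2 := by positivity
    have hcoef : N*p^2 - 2*p*Cl + C2 ≤ 0 := by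
      rw [hClpN]
      nlinarith [hqp, hClpN]
    nlinarith [mul_nonneg hC20 hD0]
  calc ∑ S ∈ A, ‖(1-p)⁻¹ • (∑ i, (if (S ∩ W i).Nonempty then (1:ℝ) else 0) • g i) - u‖^2
      = ∑ S ∈ A, ((1-p)⁻¹)^2 * ‖p • u - w S‖^2 := by
        refine Finset.sum_congr rfl fun S _ => ?_
        rw [hstep1 S, hterm S]
    _ = ((1-p)⁻¹)^2 * ∑ S ∈ A, ‖p • u - w S‖^2 := by rw [← Finset.mul_sum]
    _ ≤ ((1-p)⁻¹)^2 * (Cl * D) := by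
        apply mul_le_mul_of_nonneg_left hsumle (by positivity)
    _ ≤ 4 * p * N * (mm * cσ^2) := by
        have h4 : ((1-p)⁻¹)^2 ≤ 4 := by nlinarith
        rw [hClpN]
        have hpN : 0 ≤ p * N := by positivity
        have hmm : (0:ℝ) ≤ (mm:ℝ) * cσ^2 := by positivity
        nlinarith [mul_nonneg hpN hD0, mul_nonneg hpN hmm]

end EHhelp

set_option maxHeartbeats 4000000 in

/-- Convergence of ErasureHead with step size `γ = 1/β` on a `β`-smooth, `μ`-PL function,
when `c ≥ n ln(2)/r`: `Δ_T ≤ (1-μ/β)^T Δ_0 + e^{-cr/n}σ²/μ + 4c e^{-cr/n}σ²/(μn)`. -/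
theorem erasurehead_convergence_exp_bound_step_one_over_beta
    {d n k c r ℓ T : ℕ} (hn : 0 < n) (hc : c ∣ n) (hrpos : 0 < r)
    (hr : r ≤ k) (hℓ : n * ℓ = k * c) (h2ℓ : 2 * ℓ ≤ k)
    (hcr : (c : ℝ) ≥ (n : ℝ) * Real.log 2 / (r : ℝ))
    (W : Fin (n / c) → Finset (Fin k))
    (hWcard : ∀ i, (W i).card = ℓ)
    (hWdisj : ∀ i j, i ≠ j → Disjoint (W i) (W j))
    (f : Fin n → EuclideanSpace ℝ (Fin d) → ℝ)
    (hdiff : ∀ i, Differentiable ℝ (f i))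
    (σ β μ fstar : ℝ) (hμ : 0 < μ) (hβμ : μ ≤ β)
    (hσ : ∀ i x, ‖gradient (f i) x‖ ≤ σ)
    (F : EuclideanSpace ℝ (Fin d) → ℝ)
    (hF : F = fun y => (1 / (n : ℝ)) * ∑ i, f i y)
    (hsmooth : ∀ x y, F y ≤ F x + inner ℝ (gradient F x) (y - x) + (β / 2) * ‖y - x‖ ^ 2)
    (hmin : ∀ x, fstar ≤ F x) (hattain : ∃ x, F x = fstar)
    (hPL : ∀ x, μ * (F x - fstar) ≤ (1 / 2) * ‖gradient F x‖ ^ 2)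
    (p : ℝ)
    (hp : p = ((k - ℓ).choose r : ℝ) / (k.choose r : ℝ))
    (x0 : EuclideanSpace ℝ (Fin d))
    (X : (ℕ → Finset (Fin k)) → ℕ → EuclideanSpace ℝ (Fin d))
    (hX : X = fun ω => traj x0 (fun S x => x - (1 / β) • ((1 - p)⁻¹ •
        ((1 / (n : ℝ)) • ∑ i : Fin (n / c),
          (if (S ∩ W i).Nonempty then (1 : ℝ) else 0) •
            ∑ j : Fin c, gradient (f (taskIdx n c hc i j)) x)) ) ω)
    (ΔT : ℝ)
    (hΔT : ΔT = (∑ ω ∈ Fintype.piFinset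
          (fun _ : Fin T => Finset.powersetCard r (Finset.univ : Finset (Fin k))),
        (F (X (fun t => if h : t < T then ω ⟨t, h⟩ else ∅) T) - fstar))
      / ((k.choose r : ℝ)) ^ T) :
    ΔT ≤ (1 - μ / β) ^ T * (F x0 - fstar)
      + Real.exp (-(c * r : ℝ) / (n : ℝ)) * σ ^ 2 / μ
      + 4 * c * Real.exp (-(c * r : ℝ) / (n : ℝ)) * σ ^ 2 / (μ * n) := by
  classical
  -- basic positivity facts
  have hcpos : 0 < c := Nat.pos_of_dvd_of_pos hc hn
  have hkpos : 0 < k := lt_of_lt_of_le hrpos hr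
  have hβ : 0 < β := lt_of_lt_of_le hμ hβμ
  have hlk : ℓ ≤ k := by omega
  have hσ0 : 0 ≤ σ := le_trans (norm_nonneg _) (hσ ⟨0, hn⟩ 0)
  have hNpos : 0 < k.choose r := Nat.choose_pos hr
  have hNR : (0:ℝ) < (k.choose r : ℝ) := by exact_mod_cast hNpos
  have hnR : (0:ℝ) < (n:ℝ) := by exact_mod_cast hn
  have hcR : (0:ℝ) < (c:ℝ) := by exact_mod_cast hcpos
  have hkR : (0:ℝ) < (k:ℝ) := by exact_mod_cast hkpos
  have hrR : (0:ℝ) < (r:ℝ) := by exact_mod_cast hrpos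
  set Eexp := Real.exp (-(c * r : ℝ) / (n : ℝ)) with hEdef
  have hE0 : 0 < Eexp := Real.exp_pos _
  -- p ≤ Eexp ≤ 1/2
  have hℓR : (n:ℝ) * (ℓ:ℝ) = (k:ℝ) * (c:ℝ) := by exact_mod_cast hℓ
  have hexp_eq : Real.exp (-((ℓ:ℝ) * (r:ℝ)) / (k:ℝ)) = Eexp := by
    rw [hEdef]
    congr 1
    rw [div_eq_div_iff (ne_of_gt hkR) (ne_of_gt hnR)]
    push_cast
    nlinarith [hℓR]
  have hpE : p ≤ Eexp := by
    rw [hp, ← hexp_eq]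
    have h20 := eh_p_le_exp k ℓ r hkpos hlk hr
    have h21 : ((ℓ * r : ℕ) : ℝ) = (ℓ:ℝ) * (r:ℝ) := by push_cast; ring
    rw [show (-(↑ℓ * ↑r) / (k:ℝ)) = (-((ℓ * r : ℕ) : ℝ) / (k:ℝ)) from by rw [h21]]
    exact_mod_cast h20
  have hEhalf : Eexp ≤ 1/2 := by
    rw [hEdef]
    have h2' : Real.exp (-Real.log 2) = 1/2 := by
      rw [Real.exp_neg, Real.exp_log (by norm_num : (0:ℝ) < 2)]
      norm_num
    rw [← h2']
    apply Real.exp_le_exp.2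
    rw [ge_iff_le, div_le_iff₀ hrR] at hcr
    rw [neg_div, neg_le_neg_iff, le_div_iff₀ hnR]
    nlinarith [hcr]
  have hp0 : 0 ≤ p := by rw [hp]; positivity
  have hphalf : p ≤ 1/2 := hpE.trans hEhalf
  have h1phalf : (1:ℝ)/2 ≤ 1 - p := by linarith
  have h1pne : (1:ℝ) - p ≠ 0 := by linarith
  -- the update map
  set upd : Finset (Fin k) → EuclideanSpace ℝ (Fin d) → EuclideanSpace ℝ (Fin d) :=
    fun S x => x - (1 / β) • ((1 - p)⁻¹ •
        ((1 / (n : ℝ)) • ∑ i : Fin (n / c),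
          (if (S ∩ W i).Nonempty then (1 : ℝ) else 0) •
            ∑ j : Fin c, gradient (f (taskIdx n c hc i j)) x)) with hupd
  set A : Finset (Finset (Fin k)) := Finset.powersetCard r (Finset.univ : Finset (Fin k))
    with hAdef
  have hcardA : (A.card : ℝ) = (k.choose r : ℝ) := by
    rw [hAdef, Finset.card_powersetCard, card_univ, Fintype.card_fin]
  -- gradient formula
  have hgradF : ∀ x, gradient F x
      = (1 / (n:ℝ)) • ∑ i : Fin (n/c), ∑ j : Fin c, gradient (f (taskIdx n c hc i j)) x := by
    intro x
    rw [hF, eh_gradient_avg f hdiff x]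
    congr 1
    exact (eh_sum_blocks hc hcpos (fun i => gradient (f i) x)).symm
  have hggnorm : ∀ (x : EuclideanSpace ℝ (Fin d)) (i : Fin (n/c)),
      ‖∑ j : Fin c, gradient (f (taskIdx n c hc i j)) x‖ ≤ (c:ℝ) * σ := by
    intro x i
    calc ‖∑ j : Fin c, gradient (f (taskIdx n c hc i j)) x‖
        ≤ ∑ j : Fin c, ‖gradient (f (taskIdx n c hc i j)) x‖ := norm_sum_le _ _
      _ ≤ ∑ _j : Fin c, σ := Finset.sum_le_sum fun j _ => hσ _ x
      _ = (c:ℝ) * σ := by rw [Finset.sum_const, card_univ, Fintype.card_fin, nsmul_eq_mul]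
  -- the one-step inequality
  set ρ : ℝ := 1 - μ/β with hρdef
  set ν : ℝ := 2 * Eexp * ((c:ℝ)/(n:ℝ)) * σ^2 / β with hνdef
  have hρ0 : 0 ≤ ρ := by
    rw [hρdef, sub_nonneg, div_le_one hβ]; exact hβμ
  have hρ1 : ρ < 1 := by
    rw [hρdef]
    have : 0 < μ/β := div_pos hμ hβ
    linarith
  have hν0 : 0 ≤ ν := by rw [hνdef]; positivity
  have hmmcast : ((n/c : ℕ) : ℝ) = (n:ℝ)/(c:ℝ) := by
    rw [Nat.cast_div hc (ne_of_gt hcR)]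
  have hstep : ∀ x : EuclideanSpace ℝ (Fin d),
      ∑ S ∈ A, (F (upd S x) - fstar) ≤ (k.choose r : ℝ) * (ρ * (F x - fstar) + ν) := by
    intro x
    set gv : Fin (n/c) → EuclideanSpace ℝ (Fin d) :=
      fun i => ∑ j : Fin c, gradient (f (taskIdx n c hc i j)) x with hgv
    set u : EuclideanSpace ℝ (Fin d) := ∑ i, gv i with hu
    set dd : Finset (Fin k) → EuclideanSpace ℝ (Fin d) :=
      fun S => (1-p)⁻¹ • (∑ i, (if (S ∩ W i).Nonempty then (1:ℝ) else 0) • gv i) with hdd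
    set N : ℝ := (k.choose r : ℝ) with hN
    -- mean and variance facts
    have hmean : ∑ S ∈ A, dd S = N • u := by
      rw [hAdef]
      exact eh_mean hr W hWcard gv p hp hphalf
    have hvar : ∑ S ∈ A, ‖dd S - u‖^2 ≤ 4 * p * N * (((n/c : ℕ):ℝ) * ((c:ℝ)*σ)^2) := by
      rw [hAdef]
      exact eh_var hr h2ℓ W hWcard hWdisj gv ((c:ℝ)*σ) (fun i => hggnorm x i)
        (by positivity) p hp hphalf
    -- the displacement
    have hδ : ∀ S, upd S x - x = -((((1/(n:ℝ)) * (1/β))) • dd S) := by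
      intro S
      have h7 : upd S x = x - (1/β) • ((1-p)⁻¹ •
          ((1/(n:ℝ)) • ∑ i, (if (S ∩ W i).Nonempty then (1:ℝ) else 0) • gv i)) := rfl
      rw [h7, sub_sub_cancel_left]
      show _ = -((((1/(n:ℝ)) * (1/β))) •
        ((1-p)⁻¹ • (∑ i, (if (S ∩ W i).Nonempty then (1:ℝ) else 0) • gv i)))
      congr 1
      module
    have hGu : gradient F x = (1/(n:ℝ)) • u := hgradF x
    -- scalar abbreviations
    set U : ℝ := ‖u‖^2 with hU
    have hU0 : 0 ≤ U := by rw [hU]; positivity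
    have hinner_sum : ∑ S ∈ A, (inner ℝ (gradient F x) (upd S x - x) : ℝ)
        = -((1/(n:ℝ)) * (1/β) * (N * ((1/(n:ℝ)) * U))) := by
      have h8 : ∀ S ∈ A, (inner ℝ (gradient F x) (upd S x - x) : ℝ)
          = -((1/(n:ℝ)) * (1/β)) * (inner ℝ (gradient F x) (dd S) : ℝ) := by
        intro S _
        rw [hδ S, inner_neg_right, real_inner_smul_right]
        ring
      rw [Finset.sum_congr rfl h8, ← Finset.mul_sum, ← inner_sum, hmean, real_inner_smul_right,
        hGu, real_inner_smul_left, real_inner_self_eq_norm_sq, ← hU]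
      ring
    have hnorm_sum : ∑ S ∈ A, ‖upd S x - x‖^2
        ≤ ((1/(n:ℝ)) * (1/β))^2 * (N * U + 4 * p * N * (((n/c : ℕ):ℝ) * ((c:ℝ)*σ)^2)) := by
      have h9 : ∀ S ∈ A, ‖upd S x - x‖^2 = ((1/(n:ℝ)) * (1/β))^2 * ‖dd S‖^2 := by
        intro S _
        rw [hδ S, norm_neg, norm_smul, Real.norm_eq_abs, mul_pow, sq_abs]
      rw [Finset.sum_congr rfl h9, ← Finset.mul_sum]
      apply mul_le_mul_of_nonneg_left _ (by positivity)
      -- ∑ ‖dd S‖² ≤ N U + variance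
      have h10 : ∀ S ∈ A, ‖dd S‖^2 = U + 2 * (inner ℝ u (dd S - u) : ℝ) + ‖dd S - u‖^2 := by
        intro S _
        have h11 := norm_add_sq_real u (dd S - u)
        rw [add_sub_cancel] at h11
        rw [h11, ← hU]
      rw [Finset.sum_congr rfl h10]
      rw [Finset.sum_add_distrib, Finset.sum_add_distrib, Finset.sum_const, ← Finset.mul_sum,
        ← inner_sum]
      have h12 : ∑ S ∈ A, (dd S - u) = 0 := by
        rw [Finset.sum_sub_distrib, hmean, Finset.sum_const]
        rw [← Nat.cast_smul_eq_nsmul ℝ A.card u, hcardA, sub_self]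
      rw [h12, inner_zero_right, nsmul_eq_mul, hcardA]
      have := hvar
      linarith
    -- PL inequality in terms of u
    have hPLu : 2*μ*(F x - fstar) ≤ (1/(n:ℝ))^2 * U := by
      have h13 := hPL x
      rw [hGu, norm_smul, Real.norm_eq_abs, mul_pow, sq_abs] at h13
      rw [← hU] at h13
      linarith
    -- assemble
    have hsm : ∀ S ∈ A, F (upd S x) - fstar
        ≤ (F x - fstar) + (inner ℝ (gradient F x) (upd S x - x) : ℝ)
          + (β/2) * ‖upd S x - x‖^2 := by
      intro S _
      have := hsmooth x (upd S x)
      linarith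
    calc ∑ S ∈ A, (F (upd S x) - fstar)
        ≤ ∑ S ∈ A, ((F x - fstar) + (inner ℝ (gradient F x) (upd S x - x) : ℝ)
            + (β/2) * ‖upd S x - x‖^2) := Finset.sum_le_sum hsm
      _ = N * (F x - fstar) + (∑ S ∈ A, (inner ℝ (gradient F x) (upd S x - x) : ℝ))
            + (β/2) * ∑ S ∈ A, ‖upd S x - x‖^2 := by
          rw [Finset.sum_add_distrib, Finset.sum_add_distrib, Finset.sum_const,
            nsmul_eq_mul, hcardA, ← Finset.mul_sum]
      _ ≤ N * (F x - fstar) + (-((1/(n:ℝ)) * (1/β) * (N * ((1/(n:ℝ)) * U))))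
            + (β/2) * (((1/(n:ℝ)) * (1/β))^2 * (N * U + 4 * p * N * (((n/c : ℕ):ℝ) * ((c:ℝ)*σ)^2))) := by
          rw [hinner_sum]
          have hb2 : (0:ℝ) ≤ β/2 := by linarith
          exact add_le_add_right (mul_le_mul_of_nonneg_left hnorm_sum hb2) _
      _ ≤ N * (ρ * (F x - fstar) + ν) := by
          rw [hmmcast]
          have hkey1 : -((1/(n:ℝ)) * (1/β) * (N * ((1/(n:ℝ)) * U)))
              + (β/2) * (((1/(n:ℝ)) * (1/β))^2 * (N * U))
              ≤ -(μ/β) * (N * (F x - fstar)) := by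
            have e1 : -((1/(n:ℝ)) * (1/β) * (N * ((1/(n:ℝ)) * U)))
                + (β/2) * (((1/(n:ℝ)) * (1/β))^2 * (N * U))
                = -(N/(2*β)) * ((1/(n:ℝ))^2 * U) := by
              field_simp
              ring
            have e3 : -(μ/β) * (N*(F x - fstar)) = -(N/(2*β)) * (2*μ*(F x - fstar)) := by
              field_simp
            have hNb : (0:ℝ) ≤ N/(2*β) := by positivity
            have h22 : N/(2*β) * (2*μ*(F x - fstar)) ≤ N/(2*β) * ((1/(n:ℝ))^2 * U) :=
              mul_le_mul_of_nonneg_left hPLu hNb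
            rw [e1, e3]
            simp only [neg_mul]
            exact neg_le_neg h22
          have hkey2 : (β/2) * (((1/(n:ℝ)) * (1/β))^2 * (4 * p * N * (((n:ℝ)/(c:ℝ)) * ((c:ℝ)*σ)^2)))
              ≤ N * ν := by
            have e2 : (β/2) * (((1/(n:ℝ)) * (1/β))^2 * (4 * p * N * (((n:ℝ)/(c:ℝ)) * ((c:ℝ)*σ)^2)))
                = N * (2 * p * ((c:ℝ)/(n:ℝ)) * σ^2 / β) := by
              field_simp
              ring
            rw [e2, hνdef]
            gcongr
          rw [hρdef]
          nlinarith [hkey1, hkey2]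
  -- the recursion over iterations
  have hrec : ∀ t : ℕ, ∀ x : EuclideanSpace ℝ (Fin d),
      ∑ ωs ∈ Fintype.piFinset (fun _ : Fin t => A),
        (F (traj x upd (fun s => if h : s < t then ωs ⟨s, h⟩ else ∅) t) - fstar)
      ≤ ((k.choose r : ℝ))^t * (ρ^t * (F x - fstar) + ν * ∑ s ∈ Finset.range t, ρ^s) := by
    intro t
    induction t with
    | zero =>
      intro x
      simp [traj]
    | succ t ih =>
      intro x
      rw [eh_piFinset_succ t A]
      have hinner : ∀ S ∈ A, ∑ ωs ∈ Fintype.piFinset (fun _ : Fin t => A),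
          (F (traj x upd
            (fun s => if h : s < t+1 then (Fin.cons S ωs : Fin (t+1) → Finset (Fin k)) ⟨s, h⟩ else ∅)
            (t+1)) - fstar)
          = ∑ ωs ∈ Fintype.piFinset (fun _ : Fin t => A),
            (F (traj (upd S x) upd (fun s => if h : s < t then ωs ⟨s, h⟩ else ∅) t) - fstar) := by
        intro S _
        refine Finset.sum_congr rfl fun ωs _ => ?_
        congr 1
        rw [eh_traj_shift]
        have h0 : (if h : (0:ℕ) < t+1 then
            (Fin.cons S ωs : Fin (t+1) → Finset (Fin k)) ⟨0, h⟩ else ∅) = S := by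
          simp
        rw [h0]
        congr 1
        apply eh_traj_congr
        intro s hs
        have hs1 : s + 1 < t + 1 := Nat.succ_lt_succ hs
        show (if h : s + 1 < t + 1 then
            (Fin.cons S ωs : Fin (t+1) → Finset (Fin k)) ⟨s+1, h⟩ else ∅)
          = (if h : s < t then ωs ⟨s, h⟩ else ∅)
        rw [dif_pos hs1, dif_pos hs]
        show (Fin.cons S ωs : Fin (t+1) → Finset (Fin k)) (Fin.succ ⟨s, hs⟩) = ωs ⟨s, hs⟩
        rw [Fin.cons_succ]
      rw [Finset.sum_congr rfl hinner]
      have hNt : (0:ℝ) ≤ ((k.choose r : ℝ))^t * ρ^t := by positivity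
      calc ∑ S ∈ A, ∑ ωs ∈ Fintype.piFinset (fun _ : Fin t => A),
            (F (traj (upd S x) upd (fun s => if h : s < t then ωs ⟨s, h⟩ else ∅) t) - fstar)
          ≤ ∑ S ∈ A, ((k.choose r : ℝ))^t * (ρ^t * (F (upd S x) - fstar)
              + ν * ∑ s ∈ Finset.range t, ρ^s) :=
            Finset.sum_le_sum fun S _ => ih (upd S x)
        _ = ((k.choose r : ℝ))^t * ρ^t * (∑ S ∈ A, (F (upd S x) - fstar))
              + (k.choose r : ℝ) * (((k.choose r : ℝ))^t * (ν * ∑ s ∈ Finset.range t, ρ^s)) := by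
            rw [← Finset.mul_sum, Finset.sum_add_distrib, Finset.sum_const, ← Finset.mul_sum,
              nsmul_eq_mul, hcardA]
            ring
        _ ≤ ((k.choose r : ℝ))^t * ρ^t * ((k.choose r : ℝ) * (ρ * (F x - fstar) + ν))
              + (k.choose r : ℝ) * (((k.choose r : ℝ))^t * (ν * ∑ s ∈ Finset.range t, ρ^s)) := by
            exact add_le_add_left (mul_le_mul_of_nonneg_left (hstep x) hNt) _
        _ = ((k.choose r : ℝ))^(t+1) * (ρ^(t+1) * (F x - fstar)
              + ν * ∑ s ∈ Finset.range (t+1), ρ^s) := by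
            rw [Finset.sum_range_succ, pow_succ, pow_succ]
            ring
  -- final assembly
  have hfinal := hrec T x0
  rw [hX] at hΔT
  simp only [] at hΔT
  rw [hΔT, div_le_iff₀ (by positivity : (0:ℝ) < ((k.choose r : ℝ))^T)]
  have hgeom : ∑ s ∈ Finset.range T, ρ^s ≤ β/μ := by
    have hne : ρ - 1 ≠ 0 := sub_ne_zero.mpr (ne_of_lt hρ1)
    have hne2 : (1:ℝ) - ρ ≠ 0 := sub_ne_zero.mpr (ne_of_gt hρ1)
    have h14 : ∑ s ∈ Finset.range T, ρ^s = (1 - ρ^T)/(1 - ρ) := by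
      rw [geom_sum_eq (ne_of_lt hρ1), div_eq_div_iff hne hne2]
      ring
    have h1ρ : 1 - ρ = μ/β := by rw [hρdef]; ring
    have hρT : 0 ≤ ρ^T := pow_nonneg hρ0 T
    rw [h14, h1ρ, div_le_iff₀ (div_pos hμ hβ)]
    have h19 : β/μ * (μ/β) = 1 := by field_simp
    rw [h19]
    linarith
  have hνgeom : ν * ∑ s ∈ Finset.range T, ρ^s
      ≤ Eexp * σ^2/μ + 4*(c:ℝ)*Eexp*σ^2/(μ*(n:ℝ)) := by
    have h15 : ν * ∑ s ∈ Finset.range T, ρ^s ≤ ν * (β/μ) :=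
      mul_le_mul_of_nonneg_left hgeom hν0
    have h16 : ν * (β/μ) = 2*Eexp*((c:ℝ)/(n:ℝ))*σ^2/μ := by
      rw [hνdef]
      field_simp
    have h17 : 2*Eexp*((c:ℝ)/(n:ℝ))*σ^2/μ ≤ 4*(c:ℝ)*Eexp*σ^2/(μ*(n:ℝ)) := by
      have e4 : 2*Eexp*((c:ℝ)/(n:ℝ))*σ^2/μ = 2*(c:ℝ)*Eexp*σ^2/(μ*(n:ℝ)) := by
        field_simp
      rw [e4]
      have h17' : 2*(c:ℝ)*Eexp*σ^2 ≤ 4*(c:ℝ)*Eexp*σ^2 := by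
        nlinarith [mul_nonneg (mul_nonneg hcR.le hE0.le) (sq_nonneg σ)]
      exact (div_le_div_iff_of_pos_right (by positivity)).mpr h17'
    have h18 : (0:ℝ) ≤ Eexp * σ^2/μ := by positivity
    linarith
  calc ∑ ω ∈ Fintype.piFinset (fun _ : Fin T => A),
        (F (traj x0 upd (fun t => if h : t < T then ω ⟨t, h⟩ else ∅) T) - fstar)
      ≤ ((k.choose r : ℝ))^T * (ρ^T * (F x0 - fstar) + ν * ∑ s ∈ Finset.range T, ρ^s) := hfinal
    _ ≤ ((1 - μ / β) ^ T * (F x0 - fstar) + Eexp * σ^2/μ + 4*(c:ℝ)*Eexp*σ^2/(μ*(n:ℝ)))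
          * ((k.choose r : ℝ))^T := by
        rw [mul_comm]
        apply mul_le_mul_of_nonneg_right _ (by positivity)
        rw [hρdef] at hνgeom ⊢
        linarith [hνgeom]
end
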